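/- arXiv:2004.05144 — 8 statements merged into one kernel-verified Lean document; each statement's English description precedes it below -/
import Mathlib

section
/- Let p be a prime, R a commutative ring of characteristic p, and G a finite abelian p-group. Then every element x of the augmentation ideal I_G of the group algebra R[G] satisfies x^{|G|} = 0; in particular, every element of I_G is nilpotent. -/
/-- The augmentation map of the group algebra `R[G]`: the `R`-algebra homomorphism
sending every group element to `1`. -/
noncomputable def augmentation (R : Type*) [CommRing R] (G : Type*) [CommGroup G] :
    MonoidAlgebra R G →ₐ[R] R :=
  MonoidAlgebra.lift R R G 1

/-- If `R` is a commutative ring of characteristic `p` and `G` is a finite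
abelian `p`-group, then every element `x` of the augmentation ideal of `R[G]` satisfies
`x ^ |G| = 0`; in particular every element of the augmentation ideal is nilpotent. -/
theorem stmt0 (p : ℕ) (hp : p.Prime) (R : Type*) [CommRing R] [CharP R p]
    (G : Type*) [CommGroup G] [Fintype G] (hG : IsPGroup p G)
    (x : MonoidAlgebra R G) (hx : x ∈ RingHom.ker (augmentation R G)) :
    x ^ Fintype.card G = 0 ∧ IsNilpotent x := by
  have hfact : Fact p.Prime := ⟨hp⟩
  obtain ⟨n, hn⟩ := IsPGroup.iff_card.mp hG
  rw [Nat.card_eq_fintype_card] at hn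
  have hchar : CharP (MonoidAlgebra R G) p :=
    charP_of_injective_algebraMap (R := R)
      (fun a b h => by
        have := congrArg (fun f : MonoidAlgebra R G => f.coeff 1) h
        simpa [MonoidAlgebra.coe_algebraMap, MonoidAlgebra.coeff_single] using this) p
  have hexp : ExpChar (MonoidAlgebra R G) p := ExpChar.prime hp
  have hexpR : ExpChar R p := ExpChar.prime hp
  -- augmentation of x is the sum of coefficients
  have haug : (x.coeff.sum fun _ b => b) = 0 := by
    have : augmentation R G x = 0 := hx
    rw [augmentation, MonoidAlgebra.lift_apply] at this
    simpa using this
  have key : x ^ Fintype.card G = 0 := by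
    rw [hn]
    have : x ^ p ^ n = iterateFrobenius (MonoidAlgebra R G) p n x := rfl
    rw [this]
    conv_lhs => rw [← MonoidAlgebra.sum_coeff_single x]
    rw [Finsupp.sum, map_sum]
    have step : ∀ g ∈ x.coeff.support,
        iterateFrobenius (MonoidAlgebra R G) p n (MonoidAlgebra.single g (x.coeff g)) =
          MonoidAlgebra.single 1 ((x.coeff g) ^ p ^ n) := by
      intro g _
      rw [iterateFrobenius_def, MonoidAlgebra.single_pow]
      congr 1
      rw [← hn]
      exact pow_card_eq_one
    rw [Finset.sum_congr rfl step, (show ∀ (s : Finset G) (f : G → R), ∑ g ∈ s, MonoidAlgebra.single (1 : G) (f g) = MonoidAlgebra.single 1 (∑ g ∈ s, f g)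
      from fun s f => (map_sum (MonoidAlgebra.singleAddHom (R := R) (1 : G)) f s).symm)]
    have : ∑ g ∈ x.coeff.support, (x.coeff g) ^ p ^ n =
        iterateFrobenius R p n (∑ g ∈ x.coeff.support, x.coeff g) := by
      rw [map_sum]; simp [iterateFrobenius_def]
    rw [this]
    have : (∑ g ∈ x.coeff.support, x.coeff g) = 0 := haug
    rw [this]
    simp
  exact ⟨key, ⟨Fintype.card G, key⟩⟩
end

section
/- Let p be a prime, R a commutative ring of characteristic p, and G a finite abelian p-group. The map sending a prime ideal 𝔭 of R to the ideal 𝔭_G := ε⁻¹(𝔭) of R[G] (the preimage of 𝔭 under the augmentation map ε) is a bijection from the prime spectrum of R onto the prime spectrum of R[G]; moreover, 𝔭 is a maximal ideal of R if and only if 𝔭_G is a maximal ideal of R[G]. -/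
section aux
variable (R : Type*) [CommRing R] (G : Type*) [CommGroup G]

lemma aug_surj : Function.Surjective (augmentation R G) := fun r =>
  ⟨algebraMap R _ r, (augmentation R G).commutes r⟩

lemma aug_single (g : G) (r : R) : augmentation R G (MonoidAlgebra.single g r) = r := by
  simp [augmentation, MonoidAlgebra.lift_single]

lemma sub_mem_span (x : MonoidAlgebra R G) :
    x - algebraMap R _ (augmentation R G x) ∈
      Ideal.span {y : MonoidAlgebra R G | ∃ g : G, y = MonoidAlgebra.of R G g - 1} := by
  induction x using MonoidAlgebra.induction_linear with
  | zero => simp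
  | add a b ha hb =>
      rw [map_add, map_add, ← sub_add_sub_comm]
      exact Ideal.add_mem _ ha hb
  | single g r =>
      have : (MonoidAlgebra.single g r : MonoidAlgebra R G) -
          algebraMap R _ (augmentation R G (MonoidAlgebra.single g r)) =
          r • (MonoidAlgebra.of R G g - 1) := by
        rw [aug_single, smul_sub, Algebra.algebraMap_eq_smul_one]
        simp [MonoidAlgebra.of_apply, MonoidAlgebra.one_def, MonoidAlgebra.smul_single']
      rw [this]
      have hm : (MonoidAlgebra.of R G g - 1) ∈
          {y : MonoidAlgebra R G | ∃ g : G, y = MonoidAlgebra.of R G g - 1} := ⟨g, rfl⟩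
      rw [Algebra.smul_def]
      exact Ideal.mul_mem_left _ _ (Ideal.subset_span hm)

lemma ker_le_nil (p : ℕ) (hp : p.Prime) [CharP R p] (hG : IsPGroup p G) :
    RingHom.ker (augmentation R G).toRingHom ≤ nilradical (MonoidAlgebra R G) := by
  haveI : Fact p.Prime := ⟨hp⟩
  have hinj : Function.Injective (algebraMap R (MonoidAlgebra R G)) := fun a b h => by
    have := congrArg (augmentation R G) h
    simpa [(augmentation R G).commutes, aug_single] using this
  haveI : CharP (MonoidAlgebra R G) p := charP_of_injective_algebraMap hinj p
  intro x hx
  have hx0 : augmentation R G x = 0 := hx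
  have hmem := sub_mem_span R G x
  rw [hx0, map_zero, sub_zero] at hmem
  refine Ideal.span_le.mpr ?_ hmem
  rintro y ⟨g, rfl⟩
  obtain ⟨k, hk⟩ := hG g
  refine mem_nilradical.mpr ⟨p ^ k, ?_⟩
  rw [sub_pow_char_pow, one_pow, ← map_pow, hk, map_one, sub_self]

end aux

/-- For `R` a commutative ring of characteristic `p` and `G` a finite abelian
`p`-group, the map `𝔭 ↦ 𝔭_G := ε⁻¹(𝔭)` (preimage under the augmentation map) is a bijection
`Spec R ≃ Spec R[G]`, and `𝔭` is maximal iff `𝔭_G` is maximal. -/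
theorem stmt1 (p : ℕ) (hp : p.Prime) (R : Type*) [CommRing R] [CharP R p]
    (G : Type*) [CommGroup G] [Fintype G] (hG : IsPGroup p G) :
    Function.Bijective (fun 𝔭 : PrimeSpectrum R =>
      PrimeSpectrum.comap (augmentation R G).toRingHom 𝔭) ∧
    ∀ 𝔭 : Ideal R, 𝔭.IsPrime →
      (𝔭.IsMaximal ↔ (Ideal.comap (augmentation R G) 𝔭).IsMaximal) := by
  have hsurj : Function.Surjective (augmentation R G).toRingHom := aug_surj R G
  have hker := ker_le_nil R G p hp hG
  constructor
  · constructor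
    · exact PrimeSpectrum.comap_injective_of_surjective _ hsurj
    · intro q
      haveI := q.isPrime
      have hkq : RingHom.ker (augmentation R G).toRingHom ≤ q.asIdeal :=
        hker.trans (nilradical_le_prime q.asIdeal)
      haveI : (q.asIdeal.map (augmentation R G).toRingHom).IsPrime :=
        Ideal.map_isPrime_of_surjective hsurj hkq
      refine ⟨⟨q.asIdeal.map (augmentation R G).toRingHom, inferInstance⟩, ?_⟩
      apply PrimeSpectrum.ext
      show Ideal.comap _ (Ideal.map _ _) = _
      rw [Ideal.comap_map_of_surjective _ hsurj]
      exact sup_eq_left.mpr hkq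
  · intro 𝔭 h𝔭
    constructor
    · intro hmax
      exact Ideal.comap_isMaximal_of_surjective _ hsurj
    · intro hmax
      have hmap : Ideal.map (augmentation R G).toRingHom
          (Ideal.comap (augmentation R G) 𝔭) = 𝔭 :=
        Ideal.map_comap_of_surjective _ hsurj 𝔭
      rcases Ideal.map_eq_top_or_isMaximal_of_surjective _ hsurj hmax with h | h
      · rw [hmap] at h; exact absurd h h𝔭.ne_top
      · rwa [hmap] at h
end

section
/- Let p be a prime, R a commutative local ring of characteristic p, and G a finite abelian p-group. Then the group algebra R[G] is a local ring, whose maximal ideal is the preimage under the augmentation map ε of the maximal ideal of R. -/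
theorem augmentation_surjective (R : Type*) [CommRing R] (G : Type*) [CommGroup G] :
    Function.Surjective (augmentation R G) :=
  fun r => ⟨algebraMap R _ r, (augmentation R G).commutes r⟩

theorem ker_le_nilradical (p : ℕ) (hp : p.Prime) (R : Type*) [CommRing R] [CharP R p]
    (G : Type*) [CommGroup G] (hG : IsPGroup p G)
    {x : MonoidAlgebra R G} (hx : augmentation R G x = 0) :
    x ∈ nilradical (MonoidAlgebra R G) := by
  haveI : Fact p.Prime := ⟨hp⟩
  have hinj : Function.Injective (algebraMap R (MonoidAlgebra R G)) := by
    intro a b h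
    have := congrArg (augmentation R G) h
    simpa [augmentation, MonoidAlgebra.lift_single] using this
  haveI : CharP (MonoidAlgebra R G) p := charP_of_injective_algebraMap hinj p
  -- each single g 1 - 1 is nilpotent
  have hnil : ∀ g : G, (MonoidAlgebra.single g (1:R) - 1) ∈ nilradical (MonoidAlgebra R G) := by
    intro g
    obtain ⟨k, hk⟩ := hG g
    refine ⟨p ^ k, ?_⟩
    rw [sub_pow_char_pow, MonoidAlgebra.single_pow, hk, one_pow, one_pow]
    simp [MonoidAlgebra.one_def]
  -- decompose x
  have hsum : x = ∑ g ∈ x.coeff.support, x.coeff g • (MonoidAlgebra.single g (1:R) - 1) := by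
    have h1 : (x.coeff.support.sum fun g => x.coeff g • (1 : MonoidAlgebra R G)) = 0 := by
      have : augmentation R G x = x.coeff.support.sum fun g => x.coeff g := by
        simp [augmentation, MonoidAlgebra.lift_apply, Finsupp.sum]
      simp only [smul_eq_mul, mul_one, ← Finset.sum_smul]
      rw [← this, hx, zero_smul]
    calc x = ∑ g ∈ x.coeff.support, x.coeff g • MonoidAlgebra.single g (1:R) := by
            conv_lhs => rw [show x = x.coeff.sum MonoidAlgebra.single from (MonoidAlgebra.sum_coeff_single x).symm]
            simp [Finsupp.sum, MonoidAlgebra.smul_single]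
      _ = ∑ g ∈ x.coeff.support, x.coeff g • (MonoidAlgebra.single g (1:R) - 1) := by
            rw [Finset.sum_congr rfl (fun g _ => smul_sub (x.coeff g) _ _), Finset.sum_sub_distrib, h1,
              sub_zero]
  rw [hsum]
  refine Ideal.sum_mem _ fun g _ => ?_
  rw [Algebra.smul_def]
  exact Ideal.mul_mem_left _ _ (hnil g)

/-- If `R` is a commutative local ring of characteristic `p` and `G` is a
finite abelian `p`-group, then `R[G]` is a local ring whose maximal ideal is the preimage
under the augmentation map of the maximal ideal of `R`. -/
theorem stmt2 (p : ℕ) (hp : p.Prime) (R : Type*) [CommRing R] [CharP R p] [IsLocalRing R]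
    (G : Type*) [CommGroup G] [Fintype G] (hG : IsPGroup p G) :
    IsLocalRing (MonoidAlgebra R G) ∧
    (Ideal.comap (augmentation R G) (IsLocalRing.maximalIdeal R)).IsMaximal ∧
    ∀ I : Ideal (MonoidAlgebra R G), I.IsMaximal →
      I = Ideal.comap (augmentation R G) (IsLocalRing.maximalIdeal R) := by
  set ε := (augmentation R G).toRingHom with hε
  have hsurj : Function.Surjective ε := augmentation_surjective R G
  set M := Ideal.comap (augmentation R G) (IsLocalRing.maximalIdeal R) with hM
  haveI : M.IsMaximal := Ideal.comap_isMaximal_of_surjective ε hsurj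
  have huniq : ∀ I : Ideal (MonoidAlgebra R G), I.IsMaximal → I = M := by
    intro I hI
    have hker : RingHom.ker ε ≤ I := by
      intro y hy
      haveI := hI.isPrime
      exact nilradical_le_prime I (ker_le_nilradical p hp R G hG hy)
    have hcm : Ideal.comap ε (Ideal.map ε I) = I := by
      rw [Ideal.comap_map_of_surjective ε hsurj,
        sup_eq_left.mpr (le_trans (le_of_eq (RingHom.ker_eq_comap_bot ε).symm) hker)]
    have hne : Ideal.map ε I ≠ ⊤ := by
      intro h
      rw [h, Ideal.comap_top] at hcm
      exact hI.ne_top hcm.symm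
    have hle : Ideal.map ε I ≤ IsLocalRing.maximalIdeal R :=
      IsLocalRing.le_maximalIdeal hne
    have : I ≤ M := hcm ▸ Ideal.comap_mono hle
    exact hI.eq_of_le ‹M.IsMaximal›.ne_top this
  exact ⟨IsLocalRing.of_unique_max_ideal ⟨M, ‹M.IsMaximal›, huniq⟩, ‹M.IsMaximal›, huniq⟩
end

section
/- Let p be a prime, R a commutative ring of characteristic p, and G a finite abelian p-group. For every x ∈ R[G] one has x^{|G|} = ε(x)^{|G|} (the right-hand side viewed in R ⊆ R[G]); consequently, x is a unit of R[G] if and only if ε(x) is a unit of R. -/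
theorem key (p : ℕ) (hp : p.Prime) (R : Type*) [CommRing R] [CharP R p]
    (G : Type*) [CommGroup G] [Fintype G] (hG : IsPGroup p G)
    (x : MonoidAlgebra R G) :
    x ^ Fintype.card G
      = algebraMap R (MonoidAlgebra R G) (augmentation R G x ^ Fintype.card G) := by
  haveI : Fact p.Prime := ⟨hp⟩
  obtain ⟨n, hn⟩ := hG.exists_card_eq
  haveI : CharP (MonoidAlgebra R G) p := by
    refine charP_of_injective_ringHom
      (f := (MonoidAlgebra.singleOneRingHom : R →+* MonoidAlgebra R G)) ?_ p
    intro a b hab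
    have := congrArg (fun f : MonoidAlgebra R G => f.coeff 1) hab
    simpa [MonoidAlgebra.singleOneRingHom] using this
  rw [Nat.card_eq_fintype_card] at hn
  rw [hn]
  -- write x as a sum of singles
  conv_lhs => rw [← x.sum_single]
  have hsum : (x.coeff.sum fun g c => MonoidAlgebra.single g c) ^ p ^ n
      = x.coeff.sum fun g c => (MonoidAlgebra.single g c) ^ p ^ n := by
    classical
    simp only [Finsupp.sum, ← iterateFrobenius_def, map_sum]
  rw [hsum]
  have hsingle : ∀ g c, (MonoidAlgebra.single g c : MonoidAlgebra R G) ^ p ^ n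
      = MonoidAlgebra.single (1 : G) (c ^ p ^ n) := by
    intro g c
    rw [MonoidAlgebra.single_pow]
    congr 1
    rw [← hn]; exact pow_card_eq_one
  simp only [hsingle]
  have : (augmentation R G x) ^ p ^ n = x.coeff.sum fun g c => c ^ p ^ n := by
    have hx : augmentation R G x = x.coeff.sum fun _ c => c := by
      conv_lhs => rw [← x.sum_single]
      rw [Finsupp.sum, map_sum, Finsupp.sum]
      refine Finset.sum_congr rfl fun g _ => ?_
      simp [augmentation, MonoidAlgebra.lift_single]
    rw [hx]
    simp only [Finsupp.sum, ← iterateFrobenius_def, map_sum]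
  rw [this, Finsupp.sum, Finsupp.sum, map_sum]
  refine Finset.sum_congr rfl fun g _ => ?_
  simp [MonoidAlgebra.coe_algebraMap]

/-- For `R` a commutative ring of characteristic `p` and `G` a finite abelian
`p`-group: every `x ∈ R[G]` satisfies `x ^ |G| = ε(x) ^ |G|` (viewed in `R ⊆ R[G]`), and `x` is
a unit of `R[G]` iff `ε(x)` is a unit of `R`. -/
theorem stmt3 (p : ℕ) (hp : p.Prime) (R : Type*) [CommRing R] [CharP R p]
    (G : Type*) [CommGroup G] [Fintype G] (hG : IsPGroup p G)
    (x : MonoidAlgebra R G) :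
    x ^ Fintype.card G
      = algebraMap R (MonoidAlgebra R G) (augmentation R G x ^ Fintype.card G) ∧
    (IsUnit x ↔ IsUnit (augmentation R G x)) := by
  have h := key p hp R G hG x
  refine ⟨h, ?_, fun hu => ?_⟩
  · exact fun hu => hu.map (augmentation R G)
  · have h1 : IsUnit (x ^ Fintype.card G) := by
      rw [h]
      exact (hu.pow _).map (algebraMap R (MonoidAlgebra R G))
    exact (isUnit_pow_iff Fintype.card_ne_zero).mp h1
end

section
/- Let p be a prime, let R be either a field or a discrete valuation ring of characteristic p, let G be a finite abelian group, and let M be a finitely generated projective R[G]-module of constant local rank, i.e. there is an n ∈ ℕ such that for every prime ideal 𝔮 of R[G] the localization M_𝔮 is a free R[G]_𝔮-module of rank n. Then M is a free R[G]-module of rank n. -/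
open TensorProduct

section Theta

variable {S : Type*} [CommRing S] {M : Type*} [AddCommGroup M] [Module S M]
variable (J : Ideal S) [J.IsMaximal]

local notation "Sm" => Localization.AtPrime J
local notation "Mm" => LocalizedModule J.primeCompl M
local notation "κ" => IsLocalRing.ResidueField (Localization.AtPrime J)

/-- The canonical map `Mm → κ ⊗ Mm`. -/
noncomputable def tau : Mm →ₗ[Sm] (κ ⊗[Sm] Mm) :=
  TensorProduct.mk Sm κ Mm 1

noncomputable def theta (x : M) : κ ⊗[Sm] Mm :=
  tau (M := M) J (LocalizedModule.mkLinearMap J.primeCompl M x)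

lemma theta_zero : theta (M := M) J 0 = 0 := by
  simp [theta]

lemma theta_add (x y : M) : theta J (x + y) = theta J x + theta J y := by
  rw [theta, theta, theta, map_add, map_add]

lemma theta_smul (c : S) (x : M) :
    theta J (c • x) = (algebraMap S Sm c) • theta J x := by
  rw [theta, map_smul, ← algebraMap_smul Sm c, map_smul, theta]

lemma residue_algebraMap_eq_zero {a : Sm} (ha : a ∈ IsLocalRing.maximalIdeal Sm) :
    algebraMap Sm κ a = 0 := by
  rw [IsLocalRing.ResidueField.algebraMap_eq]
  exact Ideal.Quotient.eq_zero_iff_mem.mpr ha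

lemma smul_tensor_eq_zero {a : Sm} (ha : a ∈ IsLocalRing.maximalIdeal Sm)
    (t : κ ⊗[Sm] Mm) : a • t = 0 := by
  rw [← algebraMap_smul κ a t, residue_algebraMap_eq_zero J ha, zero_smul]

lemma theta_smul_of_mem {c : S} (hc : c ∈ J) (x : M) : theta J (c • x) = 0 := by
  rw [theta_smul]
  exact smul_tensor_eq_zero J
    ((IsLocalization.AtPrime.to_map_mem_maximal_iff Sm J c).mpr hc) _

lemma theta_surjective : Function.Surjective (theta (M := M) J) := by
  have key : ∀ w : Mm, ∃ x : M, theta J x = tau (M := M) J w := by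
    intro w
    induction w using LocalizedModule.induction_on with
    | h y s =>
      obtain ⟨u, i, hi, hui⟩ := (inferInstance : J.IsMaximal).exists_inv
        (show (s : S) ∉ J from s.2)
      refine ⟨u • y, ?_⟩
      have h1 : (LocalizedModule.mkLinearMap J.primeCompl M) (u • y)
          = (algebraMap S Sm (u * s)) • LocalizedModule.mk y s := by
        rw [map_smul, ← algebraMap_smul Sm u]
        rw [show (LocalizedModule.mkLinearMap J.primeCompl M) y
            = (algebraMap S Sm s) • LocalizedModule.mk y s from ?_]
        · rw [← smul_assoc, smul_eq_mul, ← map_mul]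
        · rw [LocalizedModule.mkLinearMap_apply, algebraMap_smul,
            LocalizedModule.smul'_mk]
          rw [LocalizedModule.mk_eq]
          exact ⟨1, by simp [smul_smul, Submonoid.smul_def]⟩
      have hus : u * (s : S) = 1 - i := by linear_combination hui
      have hscal : algebraMap Sm κ (algebraMap S Sm (u * (s : S))) = 1 := by
        have h0 : algebraMap Sm κ (algebraMap S Sm i) = 0 :=
          residue_algebraMap_eq_zero J
            ((IsLocalization.AtPrime.to_map_mem_maximal_iff Sm J i).mpr hi)
        rw [hus, map_sub, map_sub, map_one, map_one, h0, sub_zero]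
      rw [theta, h1, map_smul,
        ← algebraMap_smul κ (algebraMap S Sm (u * (s : S)))
          (tau (M := M) J (LocalizedModule.mk y s)), hscal, one_smul]
  intro t
  induction t using TensorProduct.induction_on with
  | zero => exact ⟨0, theta_zero J⟩
  | add a b ha hb =>
    obtain ⟨x, hx⟩ := ha; obtain ⟨y, hy⟩ := hb
    exact ⟨x + y, by rw [theta_add, hx, hy]⟩
  | tmul c v =>
    obtain ⟨a, ha⟩ := IsLocalRing.residue_surjective (R := Sm) c
    obtain ⟨x, hx⟩ := key (a • v)
    refine ⟨x, ?_⟩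
    rw [hx, map_smul, tau, TensorProduct.mk_apply, smul_tmul', Algebra.smul_def,
      mul_one, IsLocalRing.ResidueField.algebraMap_eq, ha]

end Theta

section SpanAux

variable {S : Type*} [CommRing S] {M : Type*} [AddCommGroup M] [Module S M]
variable (J : Ideal S) [J.IsMaximal]

local notation "Sm" => Localization.AtPrime J
local notation "Mm" => LocalizedModule J.primeCompl M
local notation "κ" => IsLocalRing.ResidueField (Localization.AtPrime J)

lemma theta_finsetSum {ι : Type*} (s : Finset ι) (g : ι → M) :
    theta J (∑ k ∈ s, g k) = ∑ k ∈ s, theta J (g k) := by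
  classical
  induction s using Finset.induction with
  | empty => simpa using theta_zero (M := M) J
  | insert _ _ h ih => rw [Finset.sum_insert h, Finset.sum_insert h, theta_add, ih]

theorem span_mk_eq_top [Module.Finite S M] {n : ℕ} (x : Fin n → M)
    (b : Module.Basis (Fin n) κ (κ ⊗[Sm] Mm)) (hb : ∀ i, theta J (x i) = b i) :
    Submodule.span Sm
      (Set.range fun i => LocalizedModule.mk (x i) (1 : J.primeCompl)) = ⊤ := by
  haveI : Module.Finite Sm Mm :=
    Module.Finite.of_isLocalizedModule J.primeCompl (LocalizedModule.mkLinearMap J.primeCompl M)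
  exact IsLocalRing.span_eq_top_of_tmul_eq_basis (R := Sm)
    (f := fun i => LocalizedModule.mk (x i) 1) b (fun i => hb i)

theorem finrank_residue_tensor [Module.Finite S M]
    [Module.Free Sm Mm] :
    Module.finrank κ (κ ⊗[Sm] Mm) = Module.finrank Sm Mm :=
  Module.finrank_baseChange

end SpanAux

section GoodLift

variable {S : Type*} [CommRing S] {M : Type*} [AddCommGroup M] [Module S M]
variable (J : Ideal S) [J.IsMaximal]

local notation "Sm" => Localization.AtPrime J
local notation "Mm" => LocalizedModule J.primeCompl M
local notation "κ" => IsLocalRing.ResidueField (Localization.AtPrime J)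

def GoodLift {n : ℕ} (y : Fin n → M) : Prop :=
  ∃ b : Module.Basis (Fin n) κ (κ ⊗[Sm] Mm), ∀ i, theta J (y i) = b i

lemma exists_goodLift [Module.Finite S M] [Module.Free Sm Mm] {n : ℕ}
    (hrk : Module.finrank Sm Mm = n) : ∃ y : Fin n → M, GoodLift J y := by
  haveI : Module.Finite Sm Mm :=
    Module.Finite.of_isLocalizedModule J.primeCompl (LocalizedModule.mkLinearMap J.primeCompl M)
  have hfr : Module.finrank κ (κ ⊗[Sm] Mm) = n := by
    rw [finrank_residue_tensor J, hrk]
  let b := Module.finBasisOfFinrankEq _ _ hfr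
  exact ⟨fun i => Classical.choose (theta_surjective J (b i)), b,
    fun i => Classical.choose_spec (theta_surjective J (b i))⟩

end GoodLift

theorem crt_elt {S : Type*} [CommRing S] (T : Finset (Ideal S))
    (hmem : ∀ J : Ideal S, J ∈ T → J.IsMaximal) (J : Ideal S) (hJ : J ∈ T) :
    ∃ c : S, c - 1 ∈ J ∧ ∀ J' ∈ T, J' ≠ J → c ∈ J' := by
  classical
  haveI hJm : J.IsMaximal := hmem J hJ
  have hsup : J ⊔ (T.erase J).inf id = ⊤ := by
    by_contra hne
    have hIJ : (T.erase J).inf id ≤ J := by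
      by_contra hIJ
      have hlt : J < J ⊔ (T.erase J).inf id :=
        lt_of_le_of_ne le_sup_left (fun h => hIJ (le_sup_right.trans h.ge))
      exact hne (hJm.1.2 _ hlt)
    obtain ⟨J', hJ'T, hle⟩ := (Ideal.IsPrime.inf_le' hJm.isPrime).mp hIJ
    haveI hJ'm : J'.IsMaximal := hmem J' (Finset.mem_of_mem_erase hJ'T)
    exact (Finset.ne_of_mem_erase hJ'T) (hJ'm.eq_of_le hJm.1.1 hle)
  obtain ⟨a, haJ, b, hbI, hab⟩ := Submodule.mem_sup.mp
    (hsup ▸ Submodule.mem_top (x := (1 : S)))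
  refine ⟨b, ?_, ?_⟩
  · have : b - 1 = -a := by linear_combination hab
    rw [this]; exact J.neg_mem haJ
  · intro J' hJ'T hne
    exact (Finset.inf_le (Finset.mem_erase.mpr ⟨hne, hJ'T⟩) : (T.erase J).inf id ≤ id J') hbI

set_option maxHeartbeats 1000000 in
theorem free_of_finite_of_locally_free_rank {S : Type*} [CommRing S] [Nontrivial S]
    {M : Type*} [AddCommGroup M] [Module S M] [Module.Finite S M]
    (hfin : {I : Ideal S | I.IsMaximal}.Finite) (n : ℕ)
    (hfree : ∀ (J : Ideal S) [J.IsMaximal],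
      Module.Free (Localization.AtPrime J) (LocalizedModule J.primeCompl M))
    (hrank : ∀ (J : Ideal S) [J.IsMaximal],
      Module.finrank (Localization.AtPrime J) (LocalizedModule J.primeCompl M) = n) :
    Nonempty (Module.Basis (Fin n) S M) := by
  classical
  set T : Finset (Ideal S) := hfin.toFinset with hT
  have hmem : ∀ J : Ideal S, J ∈ T ↔ J.IsMaximal := fun J => hfin.mem_toFinset
  choose c hc1 hc2 using crt_elt T (fun J hJ => (hmem J).mp hJ)
  have hstep : ∀ (J : Ideal S) (h : J.IsMaximal),
      ∃ y : Fin n → M, @GoodLift S _ M _ _ J h n y := by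
    intro J h
    haveI := h
    haveI := hfree J
    exact exists_goodLift J (hrank J)
  choose y hy using hstep
  set x : Fin n → M :=
    fun i => ∑ K ∈ T.attach, c K.1 K.2 • y K.1 ((hmem K.1).mp K.2) i with hxdef
  have hx : ∀ (J : Ideal S) (h : J.IsMaximal) (i : Fin n),
      theta J (x i) = theta J (y J h i) := by
    intro J h i
    haveI := h
    have hJT : J ∈ T := (hmem J).mpr h
    rw [hxdef]
    rw [theta_finsetSum]
    rw [Finset.sum_eq_single (⟨J, hJT⟩ : {K // K ∈ T})]
    · have hcJ : c J hJT • y J ((hmem J).mp hJT) i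
          = y J ((hmem J).mp hJT) i + (c J hJT - 1) • y J ((hmem J).mp hJT) i := by
        rw [sub_smul, one_smul]; abel
      rw [hcJ, theta_add, theta_smul_of_mem _ (hc1 J hJT), add_zero]
    · intro K hK hne
      exact theta_smul_of_mem J
        (hc2 K.1 K.2 J hJT (fun hEq => hne (Subtype.ext hEq.symm))) _
    · intro habs
      exact absurd (Finset.mem_attach T _) habs
  set bS := Pi.basisFun S (Fin n) with hbS
  set φ : (Fin n → S) →ₗ[S] M := bS.constr ℕ x with hφdef
  have hφ : Function.Bijective φ := by
    apply bijective_of_localized_maximal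
    intro J hJm
    haveI := hJm
    have hJT : J ∈ T := (hmem J).mpr hJm
    haveI : Module.Finite (Localization.AtPrime J) (LocalizedModule J.primeCompl M) :=
      Module.Finite.of_isLocalizedModule J.primeCompl
        (LocalizedModule.mkLinearMap J.primeCompl M)
    haveI := hfree J
    obtain ⟨b, hb⟩ := hy J hJm
    have hxb : ∀ i, theta J (x i) = b i := fun i => (hx J hJm i).trans (hb i)
    set ψ := LocalizedModule.map J.primeCompl φ with hψ
    have hsurj : Function.Surjective ψ := by
      rw [← LinearMap.range_eq_top, ← top_le_iff,
        ← span_mk_eq_top J x b hxb, Submodule.span_le]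
      rintro _ ⟨i, rfl⟩
      refine ⟨LocalizedModule.mk (bS i) 1, ?_⟩
      rw [hψ, LocalizedModule.map_mk, hφdef, bS.constr_basis]
    have hinj : Function.Injective ψ := by
      let e : (Localization.AtPrime J) ⊗[S] (Fin n → S) ≃ₗ[Localization.AtPrime J]
          LocalizedModule J.primeCompl (Fin n → S) :=
        (IsLocalizedModule.isBaseChange J.primeCompl (Localization.AtPrime J)
          (LocalizedModule.mkLinearMap J.primeCompl (Fin n → S))).equiv
      let bD : Module.Basis (Fin n) (Localization.AtPrime J)
          (LocalizedModule J.primeCompl (Fin n → S)) :=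
        (bS.baseChange (Localization.AtPrime J)).map e
      let bM : Module.Basis (Fin n) (Localization.AtPrime J) (LocalizedModule J.primeCompl M) :=
        Module.finBasisOfFinrankEq _ _ (hrank J)
      let endo : (Fin n → Localization.AtPrime J) →ₗ[Localization.AtPrime J]
          (Fin n → Localization.AtPrime J) :=
        (bM.equivFun.toLinearMap ∘ₗ ψ) ∘ₗ (bD.equivFun.symm.toLinearMap)
      have hend : Function.Surjective endo := by
        simp only [endo, LinearMap.coe_comp, LinearEquiv.coe_coe]
        exact (bM.equivFun.surjective.comp hsurj).comp bD.equivFun.symm.surjective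
      have hei : Function.Injective endo :=
        OrzechProperty.injective_of_surjective_endomorphism endo hend
      intro u v huv
      apply bD.equivFun.injective
      apply hei
      simp only [endo, LinearMap.coe_comp, Function.comp_apply, LinearEquiv.coe_coe,
        LinearEquiv.symm_apply_apply, huv]
    exact ⟨hinj, hsurj⟩
  exact ⟨bS.map (LinearEquiv.ofBijective φ hφ)⟩

theorem maximals_finite_of_finite_algebra (R : Type*) (A : Type*) [CommRing R] [IsLocalRing R]
    [CommRing A] [Nontrivial A] [Algebra R A] [Module.Finite R A] :
    {I : Ideal A | I.IsMaximal}.Finite := by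
  set m := IsLocalRing.maximalIdeal R with hm
  set I0 : Ideal A := m.map (algebraMap R A) with hI0
  haveI : Algebra.IsIntegral R A := Algebra.IsIntegral.of_finite R A
  have key : ∀ J : Ideal A, J.IsMaximal → I0 ≤ J := by
    intro J hJ
    haveI := hJ
    haveI : (J.comap (algebraMap R A)).IsMaximal :=
      Ideal.isMaximal_comap_of_isIntegral_of_isMaximal J
    have h2 : J.comap (algebraMap R A) = m := IsLocalRing.eq_maximalIdeal this
    exact Ideal.map_le_iff_le_comap.mpr h2.ge
  obtain ⟨Jmax, hJmax⟩ := Ideal.exists_maximal A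
  have hcomap : I0.comap (algebraMap R A) = m := by
    apply le_antisymm
    · intro r hr
      by_contra hrm
      have hu : IsUnit r := by
        by_contra hnu
        exact hrm (IsLocalRing.mem_maximalIdeal r |>.mpr hnu)
      have hmem : algebraMap R A r ∈ Jmax := key Jmax hJmax hr
      exact hJmax.ne_top (Jmax.eq_top_of_isUnit_mem hmem (hu.map (algebraMap R A)))
    · exact fun r hr => Ideal.mem_map_of_mem _ hr
  haveI hcm : (I0.comap (algebraMap R A)).IsMaximal := by
    rw [hcomap]; exact IsLocalRing.maximalIdeal.isMaximal R
  letI : Field (R ⧸ I0.comap (algebraMap R A)) := Ideal.Quotient.field _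
  haveI : Module.Finite R (A ⧸ I0) :=
    Module.Finite.of_surjective (Ideal.Quotient.mkₐ R I0).toLinearMap
      (Ideal.Quotient.mkₐ_surjective R I0)
  haveI : IsScalarTower R (R ⧸ I0.comap (algebraMap R A)) (A ⧸ I0) :=
    IsScalarTower.of_algebraMap_eq (fun r => rfl)
  haveI : Module.Finite (R ⧸ I0.comap (algebraMap R A)) (A ⧸ I0) :=
    Module.Finite.of_restrictScalars_finite R _ _
  haveI : IsArtinianRing (A ⧸ I0) :=
    isArtinian_of_tower (R ⧸ I0.comap (algebraMap R A))
      (inferInstance : IsArtinian (R ⧸ I0.comap (algebraMap R A)) (A ⧸ I0))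
  have hfin2 := IsArtinianRing.setOfPred_isMaximal_finite (R := A ⧸ I0)
  have rec0 : ∀ J ∈ {I : Ideal A | I.IsMaximal},
      (J.map (Ideal.Quotient.mk I0)).comap (Ideal.Quotient.mk I0) = J := by
    intro J hJ
    rw [Ideal.comap_map_of_surjective _ Ideal.Quotient.mk_surjective, ← RingHom.ker_eq_comap_bot,
      Ideal.mk_ker]
    exact sup_eq_left.mpr (key J hJ)
  refine Set.Finite.of_finite_image
    (f := fun J : Ideal A => J.map (Ideal.Quotient.mk I0)) ?_ ?_
  · apply hfin2.subset
    rintro _ ⟨J, hJ, rfl⟩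
    rcases Ideal.map_eq_top_or_isMaximal_of_surjective (Ideal.Quotient.mk I0) Ideal.Quotient.mk_surjective hJ with
      htop | hmax
    · exfalso
      have := rec0 J hJ
      rw [htop, Ideal.comap_top] at this
      exact hJ.ne_top this.symm
    · exact hmax
  · intro J1 h1 J2 h2 he
    have he' : Ideal.map (Ideal.Quotient.mk I0) J1 = Ideal.map (Ideal.Quotient.mk I0) J2 := he
    rw [← rec0 J1 h1, ← rec0 J2 h2, he']

/-- Let `R` be a field or a discrete valuation ring of characteristic `p`,
`G` a finite abelian group, and `M` a finitely generated projective `R[G]`-module of constant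
local rank `n` (i.e. for every prime `𝔮` of `R[G]` the localization `M_𝔮` is free of rank `n`
over `R[G]_𝔮`). Then `M` is a free `R[G]`-module of rank `n`. -/
theorem stmt8 (p : ℕ) (hp : p.Prime) (R : Type*) [CommRing R] [IsDomain R] [CharP R p]
    (hR : IsField R ∨ IsDiscreteValuationRing R)
    (G : Type*) [CommGroup G] [Fintype G]
    (M : Type*) [AddCommGroup M] [Module (MonoidAlgebra R G) M]
    [Module.Finite (MonoidAlgebra R G) M] [Module.Projective (MonoidAlgebra R G) M]
    (n : ℕ)
    (hrank : ∀ 𝔮 : PrimeSpectrum (MonoidAlgebra R G),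
      Module.Free (Localization.AtPrime 𝔮.asIdeal)
        (LocalizedModule 𝔮.asIdeal.primeCompl M) ∧
      Module.finrank (Localization.AtPrime 𝔮.asIdeal)
        (LocalizedModule 𝔮.asIdeal.primeCompl M) = n) :
    Nonempty (Module.Basis (Fin n) (MonoidAlgebra R G) M) := by
  haveI : IsLocalRing R := by
    rcases hR with h | h
    · letI := h.toField; exact inferInstance
    · exact h.toIsLocalRing
  haveI : Module.Finite R (MonoidAlgebra R G) :=
    Module.Finite.equiv ((Finsupp.linearEquivFunOnFinite R R G).symm.trans (MonoidAlgebra.coeffLinearEquiv R).symm)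
  have hfin := maximals_finite_of_finite_algebra R (MonoidAlgebra R G)
  refine free_of_finite_of_locally_free_rank hfin n ?_ ?_
  · intro J hJ
    exact (hrank ⟨J, hJ.isPrime⟩).1
  · intro J hJ
    exact (hrank ⟨J, hJ.isPrime⟩).2
end

section
/- Let p be a prime, 𝔽 a finite field of characteristic p, P a finite abelian p-group, and R := 𝔽[P] the group algebra. Let R((u)) denote the ring of formal Laurent series over R in the variable u, and let ι : R[T] → R((u)) be the R-algebra homomorphism from the polynomial ring sending T to u⁻¹. Then every unit g of R((u)) admits a unique factorization g = x · ι(y), where y is a unit of the polynomial ring R[T] and x lies in u^m · (1 + u·R⟦u⟧) for some m ∈ ℤ. -/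
open HahnSeries Polynomial

namespace Stmt9Aux

variable {R : Type*} [CommRing R]

theorem algebraMap_eq (a : R) : algebraMap R (LaurentSeries R) a = HahnSeries.single 0 a := by
  rw [HahnSeries.algebraMap_apply', PowerSeries.algebraMap_apply, Algebra.algebraMap_self,
    RingHom.id_apply, HahnSeries.ofPowerSeries_C, HahnSeries.C_apply]

noncomputable def iota : Polynomial R →ₐ[R] LaurentSeries R :=
  Polynomial.aeval (HahnSeries.single (-1 : ℤ) 1)

theorem iota_coeff (q : Polynomial R) (j : ℤ) :
    (iota q).coeff j = if j ≤ 0 then q.coeff (-j).toNat else 0 := by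
  induction q using Polynomial.induction_on' with
  | add p q hp hq =>
    simp only [map_add, HahnSeries.coeff_add, hp, hq, Polynomial.coeff_add]
    split <;> simp
  | monomial n a =>
    rw [iota, Polynomial.aeval_monomial, HahnSeries.single_pow, algebraMap_eq,
      one_pow, HahnSeries.single_mul_single, zero_add]
    rw [HahnSeries.coeff_single]
    rw [Polynomial.coeff_monomial]
    by_cases h : j = n • (-1 : ℤ)
    · subst h
      simp only [smul_neg, nsmul_eq_mul, mul_one, if_pos, mul_one]
      rw [if_pos (by omega), if_pos (by omega)]
    · rw [if_neg h]
      simp only [smul_neg, nsmul_eq_mul, mul_one] at h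
      split
      · rw [if_neg (by omega)]
      · rfl

theorem ofPowerSeries_coeff_neg (f : PowerSeries R) {j : ℤ} (hj : j < 0) :
    (HahnSeries.ofPowerSeries ℤ R f).coeff j = 0 := by
  rw [HahnSeries.ofPowerSeries_apply]
  apply HahnSeries.embDomain_notin_range
  rintro ⟨n, hn⟩
  have : ((n : ℕ) : ℤ) = j := hn
  omega

theorem eq_ofPowerSeries (s : LaurentSeries R) (hs : ∀ j < (0:ℤ), s.coeff j = 0) :
    s = HahnSeries.ofPowerSeries ℤ R (PowerSeries.mk fun n => s.coeff n) := by
  ext j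
  rcases lt_or_ge j 0 with h | h
  · rw [hs j h, ofPowerSeries_coeff_neg _ h]
  · have hj : j = ((j.toNat : ℕ) : ℤ) := by omega
    rw [hj, HahnSeries.ofPowerSeries_apply_coeff, PowerSeries.coeff_mk]

theorem exists_floor (s : LaurentSeries R) : ∃ D : ℕ, ∀ j : ℤ, j < -(D:ℤ) → s.coeff j = 0 := by
  by_cases h : s = 0
  · exact ⟨0, fun j _ => by simp [h]⟩
  · refine ⟨(-s.order).toNat, fun j hj => ?_⟩
    apply HahnSeries.coeff_eq_zero_of_lt_order
    omega

theorem eq_iota_poly (s : LaurentSeries R) (hs : ∀ j > (0:ℤ), s.coeff j = 0) :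
    ∃ q : Polynomial R, iota q = s ∧ ∀ n : ℕ, q.coeff n = s.coeff (-(n:ℤ)) := by
  obtain ⟨D, hD⟩ := exists_floor s
  have key : ∀ n : ℕ, (∑ i ∈ Finset.range (D+1),
      Polynomial.monomial i (s.coeff (-(i:ℤ)))).coeff n = s.coeff (-(n:ℤ)) := by
    intro n
    rw [Polynomial.finset_sum_coeff]
    simp only [Polynomial.coeff_monomial]
    rcases lt_or_ge n (D+1) with h | h
    · rw [Finset.sum_eq_single n (fun b _ hb => if_neg hb) (fun hn => absurd (Finset.mem_range.2 h) hn)]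
      rw [if_pos rfl]
    · rw [Finset.sum_eq_zero (fun b hb => if_neg (by simp at hb; omega)), hD _ (by omega)]
  refine ⟨_, ?_, key⟩
  ext j
  rw [iota_coeff]
  rcases le_or_gt j 0 with h | h
  · rw [if_pos h, key, show -((-j).toNat : ℤ) = j by omega]
  · rw [if_neg (by omega), hs j h]


noncomputable def low (c : ℤ) (s : LaurentSeries R) : LaurentSeries R where
  coeff j := if j < c then s.coeff j else 0
  isPWO_support' := s.isPWO_support.mono (fun j hj => by
    rw [Function.mem_support] at hj
    split_ifs at hj with h
    · exact hj
    · exact absurd rfl hj)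

noncomputable def high (c : ℤ) (s : LaurentSeries R) : LaurentSeries R where
  coeff j := if j < c then 0 else s.coeff j
  isPWO_support' := s.isPWO_support.mono (fun j hj => by
    rw [Function.mem_support] at hj
    split_ifs at hj with h
    · exact absurd rfl hj
    · exact hj)

@[simp] theorem low_coeff (c j : ℤ) (s : LaurentSeries R) :
    (low c s).coeff j = if j < c then s.coeff j else 0 := rfl

@[simp] theorem high_coeff (c j : ℤ) (s : LaurentSeries R) :
    (high c s).coeff j = if j < c then 0 else s.coeff j := rfl

theorem low_add_high (c : ℤ) (s : LaurentSeries R) : low c s + high c s = s := by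
  ext j
  rw [HahnSeries.coeff_add, low_coeff, high_coeff]
  split_ifs <;> simp

theorem coeff_mul_mem (I K : Ideal R) {a b : LaurentSeries R}
    (ha : ∀ i, a.coeff i ∈ I) (hb : ∀ i, b.coeff i ∈ K) (i : ℤ) :
    (a * b).coeff i ∈ I * K := by
  rw [HahnSeries.coeff_mul]
  exact Ideal.sum_mem _ fun ij _ => Ideal.mul_mem_mul (ha _) (hb _)

theorem coeff_mul_mem_right (K : Ideal R) {a b : LaurentSeries R}
    (hb : ∀ i, b.coeff i ∈ K) (i : ℤ) : (a * b).coeff i ∈ K := by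
  rw [HahnSeries.coeff_mul]
  exact Ideal.sum_mem _ fun ij _ => K.mul_mem_left _ (hb _)

/-- The "good" factorization predicate. -/
def Good (g : LaurentSeries R) : Prop :=
  ∃ (m : ℤ) (f : PowerSeries R) (y : (Polynomial R)ˣ),
    PowerSeries.constantCoeff f = 1 ∧
    g = HahnSeries.single m 1 * HahnSeries.ofPowerSeries ℤ R f * iota (y : Polynomial R)

theorem Good.mul {a b : LaurentSeries R} (ha : Good a) (hb : Good b) : Good (a * b) := by
  obtain ⟨m, f, y, hf, rfl⟩ := ha
  obtain ⟨m', f', y', hf', rfl⟩ := hb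
  refine ⟨m + m', f * f', y * y', by rw [map_mul, hf, hf', mul_one], ?_⟩
  have hss : (HahnSeries.single (m+m') 1 : LaurentSeries R)
      = HahnSeries.single m 1 * HahnSeries.single m' 1 := by
    rw [HahnSeries.single_mul_single, mul_one]
  rw [map_mul, Units.val_mul, map_mul, hss]
  ring

theorem good_one : Good (1 : LaurentSeries R) :=
  ⟨0, 1, 1, map_one _, by simp [HahnSeries.single_zero_one, iota]⟩

theorem good_ofPowerSeries (f : PowerSeries R) (hf : PowerSeries.constantCoeff f = 1) :
    Good (HahnSeries.ofPowerSeries ℤ R f) :=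
  ⟨0, f, 1, hf, by simp [HahnSeries.single_zero_one, iota]⟩

theorem good_iota (y : (Polynomial R)ˣ) : Good (iota (y : Polynomial R)) :=
  ⟨0, 1, y, map_one _, by simp [HahnSeries.single_zero_one]⟩

theorem key (J : Ideal R) (hJ : ∀ a ∈ J, IsNilpotent a) (e : ℕ) (hJe : J ^ e = ⊥) :
    ∀ (n k : ℕ), 1 ≤ k → e ≤ k + n → ∀ s : LaurentSeries R,
      (∀ i, s.coeff i ∈ J ^ k) → Good (1 + s) := by
  intro n
  induction n with
  | zero =>
    intro k _ hek s hs
    have hs0 : s = 0 := by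
      ext j
      have := Ideal.pow_le_pow_right (by omega : e ≤ k) (hs j)
      rw [hJe, Ideal.mem_bot] at this
      simp [this]
    rw [hs0, add_zero]
    exact good_one
  | succ n IH =>
    intro k hk hek s hs
    set sm := low 1 s with hsm
    set sp := high 1 s with hsp
    -- 1 + sp is a power series with constant coefficient 1
    have hsp_neg : ∀ j < (0:ℤ), (1 + sp).coeff j = 0 := by
      intro j hj
      rw [HahnSeries.coeff_add, HahnSeries.coeff_one, high_coeff, if_neg (by omega),
        if_pos (by omega), add_zero]
    have hAeq := eq_ofPowerSeries (1 + sp) hsp_neg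
    set f₁ : PowerSeries R := PowerSeries.mk fun n => (1 + sp).coeff n with hf₁
    have hf₁const : PowerSeries.constantCoeff f₁ = 1 := by
      rw [hf₁, ← PowerSeries.coeff_zero_eq_constantCoeff_apply, PowerSeries.coeff_mk]
      rw [Nat.cast_zero, HahnSeries.coeff_add, HahnSeries.coeff_one, if_pos rfl, high_coeff,
        if_pos (by omega), add_zero]
    -- 1 + sm is iota of a unit polynomial
    have hsm_pos : ∀ j > (0:ℤ), (1 + sm).coeff j = 0 := by
      intro j hj
      rw [HahnSeries.coeff_add, HahnSeries.coeff_one, low_coeff, if_neg (by omega),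
        if_neg (by omega), add_zero]
    obtain ⟨q, hq_iota, hq_coeff⟩ := eq_iota_poly (1 + sm) hsm_pos
    have hmemJ : ∀ j : ℤ, sm.coeff j ∈ J := by
      intro j
      rw [hsm, low_coeff]
      split_ifs with h
      · have h1 : J ^ k ≤ J ^ 1 := Ideal.pow_le_pow_right (by omega)
        rw [pow_one] at h1
        exact h1 (hs j)
      · exact J.zero_mem
    have hq_unit : IsUnit q := by
      rw [Polynomial.isUnit_iff_coeff_isUnit_isNilpotent]
      constructor
      · rw [hq_coeff 0]
        rw [Nat.cast_zero, neg_zero, HahnSeries.coeff_add, HahnSeries.coeff_one, if_pos rfl]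
        exact (hJ _ (hmemJ 0)).isUnit_one_add
      · intro i hi
        rw [hq_coeff i, HahnSeries.coeff_add, HahnSeries.coeff_one, if_neg (by omega), zero_add]
        exact hJ _ (hmemJ _)
    -- units
    have hf₁unit : IsUnit (HahnSeries.ofPowerSeries ℤ R f₁) :=
      (PowerSeries.isUnit_iff_constantCoeff.mpr (hf₁const ▸ isUnit_one)).map _
    have hBunit : IsUnit (iota (q : Polynomial R)) := hq_unit.map (iota (R := R))
    set U : (LaurentSeries R)ˣ := hf₁unit.unit * hBunit.unit with hU
    have hUval : (U : LaurentSeries R) = (1 + sp) * (1 + sm) := by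
      rw [hU, Units.val_mul, IsUnit.unit_spec, IsUnit.unit_spec, ← hAeq, hq_iota]
    set δ : LaurentSeries R := (↑U⁻¹ : LaurentSeries R) * (1 + s) - 1 with hδ
    have hsum : sm + sp = s := low_add_high 1 s
    have hdiff : (1 + s) - (U : LaurentSeries R) = -(sp * sm) := by
      rw [hUval]
      have : s = sm + sp := hsum.symm
      rw [this]; ring
    have hδcoeff : ∀ i, δ.coeff i ∈ J ^ (k + 1) := by
      intro i
      have hδeq : δ = (↑U⁻¹ : LaurentSeries R) * (-(sp * sm)) := by
        rw [hδ, ← hdiff, mul_sub]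
        congr 1
        exact (Units.inv_mul U) |>.symm ▸ rfl
      rw [hδeq]
      apply coeff_mul_mem_right
      intro i
      rw [HahnSeries.coeff_neg, neg_mem_iff]
      have h2k : ∀ i, (sp * sm).coeff i ∈ J ^ (k + k) := by
        intro i
        rw [_root_.pow_add]
        refine coeff_mul_mem _ _ ?_ ?_ i
        · intro j; rw [hsp, high_coeff]; split_ifs; exacts [(J^k).zero_mem, hs j]
        · intro j; rw [hsm, low_coeff]; split_ifs; exacts [hs j, (J^k).zero_mem]
      exact Ideal.pow_le_pow_right (by omega : k + 1 ≤ k + k) (h2k i)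
    have hGδ : Good (1 + δ) := IH (k+1) (by omega) (by omega) δ hδcoeff
    have hfinal : 1 + s = (U : LaurentSeries R) * (1 + δ) := by
      rw [hδ, add_sub_cancel]
      exact (Units.mul_inv_cancel_left U (1 + s)).symm
    rw [hfinal, hUval]
    exact (Good.mul ((hAeq ▸ good_ofPowerSeries f₁ hf₁const : Good (1+sp)).mul
      (hq_iota ▸ good_iota hq_unit.unit : Good (1+sm)))) hGδ

theorem isUnit_single (m : ℤ) (c : Rˣ) : IsUnit (HahnSeries.single m (c : R)) := by
  apply IsUnit.of_mul_eq_one (HahnSeries.single (-m) ((c⁻¹ : Rˣ) : R))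
  rw [HahnSeries.single_mul_single, add_neg_cancel, Units.mul_inv, HahnSeries.single_zero_one]

theorem cancel_lemma [Nontrivial R] (d : ℤ) (F : PowerSeries R)
    (hF : PowerSeries.constantCoeff F = 1) (z : (Polynomial R)ˣ)
    (h : HahnSeries.single d 1 * HahnSeries.ofPowerSeries ℤ R F = iota (z : Polynomial R)) :
    z = 1 := by
  have hcoe : ∀ j : ℤ, (HahnSeries.single d 1 * HahnSeries.ofPowerSeries ℤ R F).coeff (j + d)
      = (HahnSeries.ofPowerSeries ℤ R F).coeff j := by
    intro j
    rw [HahnSeries.coeff_single_mul_add, one_mul]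
  have hF0 : (HahnSeries.ofPowerSeries ℤ R F).coeff ((0:ℕ):ℤ) = 1 := by
    rw [HahnSeries.ofPowerSeries_apply_coeff, PowerSeries.coeff_zero_eq_constantCoeff_apply, hF]
  have hd0 : (HahnSeries.single d (1:R) * HahnSeries.ofPowerSeries ℤ R F).coeff d = 1 := by
    have := hcoe 0
    rw [zero_add] at this
    rw [this]
    exact_mod_cast hF0
  rcases lt_trichotomy d 0 with hd | hd | hd
  · -- coefficient at d: LHS 1, RHS nilpotent
    exfalso
    have h1 : (1:R) = (z : Polynomial R).coeff (-d).toNat := by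
      rw [← hd0, h, iota_coeff, if_pos (by omega)]
    have hnil : IsNilpotent ((z : Polynomial R).coeff (-d).toNat) :=
      (Polynomial.isUnit_iff_coeff_isUnit_isNilpotent.mp z.isUnit).2 _ (by omega)
    rw [← h1] at hnil
    obtain ⟨n, hn⟩ := hnil
    rw [one_pow] at hn
    exact one_ne_zero hn
  · subst hd
    ext1
    ext n
    rcases Nat.eq_zero_or_pos n with hn | hn
    · subst hn
      have h1 : (1:R) = (z : Polynomial R).coeff 0 := by
        rw [← hd0, h, iota_coeff, if_pos le_rfl]
        norm_num
      rw [← h1]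
      simp
    · have h1 : (HahnSeries.single (0:ℤ) (1:R) * HahnSeries.ofPowerSeries ℤ R F).coeff (-(n:ℤ))
          = 0 := by
        have := hcoe (-(n:ℤ))
        rw [add_zero] at this
        rw [this, ofPowerSeries_coeff_neg _ (by omega)]
      rw [h, iota_coeff, if_pos (by omega)] at h1
      rw [show (-(-(n:ℤ))).toNat = n by omega] at h1
      rw [h1, Units.val_one, Polynomial.coeff_one, if_neg (by omega)]
  · exfalso
    have h1 : (1:R) = 0 := by
      rw [← hd0, h, iota_coeff, if_neg (by omega)]
    exact one_ne_zero h1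

section GA

variable (p : ℕ) (𝔽 : Type*) [Field 𝔽] [Fintype 𝔽] [CharP 𝔽 p]
  (P : Type*) [CommGroup P] [Fintype P]

noncomputable def eps : MonoidAlgebra 𝔽 P →ₐ[𝔽] 𝔽 := MonoidAlgebra.lift 𝔽 𝔽 P 1

theorem eps_single (g : P) (b : 𝔽) : eps 𝔽 P (MonoidAlgebra.single g b) = b := by
  rw [eps, MonoidAlgebra.lift_single]; simp

theorem eps_algebraMap (b : 𝔽) : algebraMap 𝔽 (MonoidAlgebra 𝔽 P) b = MonoidAlgebra.single 1 b :=
  rfl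

variable {p 𝔽 P}
variable (hp : p.Prime) (hP : IsPGroup p P)
include hp hP

theorem nilpotent_sub (a : MonoidAlgebra 𝔽 P) :
    IsNilpotent (a - algebraMap 𝔽 (MonoidAlgebra 𝔽 P) (eps 𝔽 P a)) := by
  haveI : CharP (MonoidAlgebra 𝔽 P) p :=
    charP_of_injective_algebraMap (algebraMap 𝔽 (MonoidAlgebra 𝔽 P)).injective p
  haveI : Fact p.Prime := ⟨hp⟩
  induction a using MonoidAlgebra.induction with
  | zero => simp
  | single_add g b f hg hb ih =>
    let f' : MonoidAlgebra 𝔽 P := f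
    have ih' : IsNilpotent (f' - algebraMap 𝔽 (MonoidAlgebra 𝔽 P) (eps 𝔽 P f')) := ih
    show IsNilpotent ((MonoidAlgebra.single g b + f')
      - algebraMap 𝔽 (MonoidAlgebra 𝔽 P) (eps 𝔽 P (MonoidAlgebra.single g b + f')))
    have heq : (MonoidAlgebra.single g b + f')
        - algebraMap 𝔽 (MonoidAlgebra 𝔽 P) (eps 𝔽 P (MonoidAlgebra.single g b + f'))
        = ((MonoidAlgebra.single g b : MonoidAlgebra 𝔽 P)
            - algebraMap 𝔽 (MonoidAlgebra 𝔽 P) b)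
          + (f' - algebraMap 𝔽 (MonoidAlgebra 𝔽 P) (eps 𝔽 P f)) := by
      rw [map_add, eps_single, map_add]
      ring
    rw [heq]
    refine (Commute.all _ _).isNilpotent_add ?_ ih'
    -- single g b - algebraMap b = (single g 1 - 1) * single 1 b
    have hfac : (MonoidAlgebra.single g b : MonoidAlgebra 𝔽 P)
        - algebraMap 𝔽 (MonoidAlgebra 𝔽 P) b
        = ((MonoidAlgebra.single g 1 : MonoidAlgebra 𝔽 P) - 1) * MonoidAlgebra.single 1 b := by
      rw [eps_algebraMap, sub_mul, one_mul, MonoidAlgebra.single_mul_single, mul_one, one_mul]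
    rw [hfac]
    refine (Commute.all _ _).isNilpotent_mul_right ?_
    obtain ⟨k, hk⟩ := hP g
    refine ⟨p ^ k, ?_⟩
    rw [MonoidAlgebra.one_def, sub_pow_char_pow (p := p), MonoidAlgebra.single_pow,
      MonoidAlgebra.single_pow, hk, one_pow, one_pow, sub_self]

theorem nilpotent_of_eps_zero {a : MonoidAlgebra 𝔽 P} (ha : eps 𝔽 P a = 0) : IsNilpotent a := by
  have := nilpotent_sub hp hP a
  rwa [ha, map_zero, sub_zero] at this

theorem isUnit_of_eps_ne {a : MonoidAlgebra 𝔽 P} (ha : eps 𝔽 P a ≠ 0) : IsUnit a := by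
  have h2 := nilpotent_sub hp hP a
  have h1 : IsUnit (algebraMap 𝔽 (MonoidAlgebra 𝔽 P) (eps 𝔽 P a)) :=
    (isUnit_iff_ne_zero.mpr ha).map _
  have := h2.isUnit_add_right_of_commute h1 (Commute.all _ _)
  rwa [sub_add_cancel] at this

theorem ker_pow_eq_bot : ∃ e : ℕ, (RingHom.ker (eps 𝔽 P).toRingHom) ^ e = ⊥ := by
  haveI : Finite (MonoidAlgebra 𝔽 P) :=
    Finite.of_injective (fun f : MonoidAlgebra 𝔽 P => (f.coeff : P → 𝔽))
      (fun a b h => MonoidAlgebra.coeff_injective (DFunLike.coe_injective h))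
  haveI : IsNoetherianRing (MonoidAlgebra 𝔽 P) := isNoetherian_of_finite _ _
  obtain ⟨e, he⟩ := IsNoetherianRing.isNilpotent_nilradical (MonoidAlgebra 𝔽 P)
  refine ⟨e, le_antisymm ?_ bot_le⟩
  rw [← Ideal.zero_eq_bot, ← he]
  apply Ideal.pow_right_mono
  intro a ha
  rw [mem_nilradical]
  exact nilpotent_of_eps_zero hp hP (by rwa [RingHom.mem_ker] at ha)

end GA

end Stmt9Aux



open Stmt9Aux

/-- Let `𝔽` be a finite field of characteristic `p`, `P` a finite abelian
`p`-group, and `R := 𝔽[P]`. Every unit `g` of the Laurent series ring `R((u))` admits a unique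
factorization `g = x · ι(y)` where `y` is a unit of the polynomial ring `R[T]`,
`ι : R[T] → R((u))` is the `R`-algebra map sending `T ↦ u⁻¹`, and
`x ∈ u^m · (1 + u·R⟦u⟧)` for some `m ∈ ℤ`. -/
theorem stmt9 (p : ℕ) (hp : p.Prime)
    (𝔽 : Type*) [Field 𝔽] [Fintype 𝔽] [CharP 𝔽 p]
    (P : Type*) [CommGroup P] [Fintype P] (hP : IsPGroup p P)
    (g : (LaurentSeries (MonoidAlgebra 𝔽 P))ˣ) :
    ∃! xy : LaurentSeries (MonoidAlgebra 𝔽 P) × (Polynomial (MonoidAlgebra 𝔽 P))ˣ,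
      (∃ (m : ℤ) (f : PowerSeries (MonoidAlgebra 𝔽 P)),
          PowerSeries.constantCoeff f = 1 ∧
          xy.1 = HahnSeries.single m 1 * HahnSeries.ofPowerSeries ℤ (MonoidAlgebra 𝔽 P) f) ∧
      (g : LaurentSeries (MonoidAlgebra 𝔽 P))
        = xy.1 * Polynomial.aeval
            (HahnSeries.single (-1 : ℤ) (1 : MonoidAlgebra 𝔽 P)) (xy.2 : Polynomial (MonoidAlgebra 𝔽 P)) := by
  classical
  set R := MonoidAlgebra 𝔽 P with hR
  set J : Ideal R := RingHom.ker (eps 𝔽 P).toRingHom with hJdef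
  have hJnil : ∀ a ∈ J, IsNilpotent a := fun a ha =>
    nilpotent_of_eps_zero hp hP (by rwa [hJdef, RingHom.mem_ker] at ha)
  obtain ⟨e, hJe⟩ := ker_pow_eq_bot hp hP (𝔽 := 𝔽) (P := P)
  rw [← hJdef] at hJe
  -- Existence of a Good factorization of g
  have hGood : Good ((g : LaurentSeries R)) := by
    have hex : ∃ i : ℤ, (g : LaurentSeries R).coeff i ∉ J := by
      by_contra hall
      push_neg at hall
      have h1 : ((↑g⁻¹ * ↑g : LaurentSeries R)).coeff 0 ∈ J :=
        coeff_mul_mem_right J hall 0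
      rw [Units.inv_mul] at h1
      rw [HahnSeries.coeff_one, if_pos rfl] at h1
      rw [hJdef, RingHom.mem_ker] at h1
      rw [AlgHom.toRingHom_eq_coe, RingHom.coe_coe, map_one] at h1
      exact one_ne_zero h1
    set T : Set ℤ := {i | (g : LaurentSeries R).coeff i ∉ J} with hT
    have hTsub : T ⊆ (g : LaurentSeries R).support := by
      intro i hi
      rw [HahnSeries.mem_support]
      intro h0
      exact hi (h0 ▸ J.zero_mem)
    have hWF : T.IsWF := ((g : LaurentSeries R).isWF_support).mono hTsub
    have hne : T.Nonempty := hex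
    set m : ℤ := hWF.min hne with hm
    have hmT : m ∈ T := hWF.min_mem hne
    have hlow : ∀ i < m, (g : LaurentSeries R).coeff i ∈ J := by
      intro i hi
      by_contra hiJ
      exact hWF.not_lt_min hne hiJ hi
    have hc : IsUnit ((g : LaurentSeries R).coeff m) := by
      refine isUnit_of_eps_ne hp hP ?_
      intro h0
      exact hmT (by rwa [hJdef, RingHom.mem_ker])
    obtain ⟨cu, hcu⟩ := hc
    set w : LaurentSeries R := HahnSeries.single (-m) ((cu⁻¹ : Rˣ) : R) * (g : LaurentSeries R)
      with hwdef
    have hw : ∀ j : ℤ, w.coeff j = ((cu⁻¹ : Rˣ) : R) * (g : LaurentSeries R).coeff (m + j) := by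
      intro j
      have h := HahnSeries.coeff_single_mul_add (r := ((cu⁻¹ : Rˣ) : R))
        (x := (g : LaurentSeries R)) (a := m + j) (b := -m)
      rw [show m + j + -m = j by ring] at h
      exact h
    have hw0 : w.coeff 0 = 1 := by
      rw [hw, add_zero, ← hcu, Units.inv_mul]
    have hwneg : ∀ j < (0:ℤ), w.coeff j ∈ J := by
      intro j hj
      rw [hw]
      exact J.mul_mem_left _ (hlow _ (by omega))
    set whigh := high 0 w with hwhigh
    set wlow := low 0 w with hwlow
    have hfw : whigh = HahnSeries.ofPowerSeries ℤ R (PowerSeries.mk fun n => whigh.coeff n) := by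
      apply eq_ofPowerSeries
      intro j hj
      rw [hwhigh, high_coeff, if_pos hj]
    set f : PowerSeries R := PowerSeries.mk fun n => whigh.coeff n with hf
    have hfconst : PowerSeries.constantCoeff f = 1 := by
      rw [hf, ← PowerSeries.coeff_zero_eq_constantCoeff_apply, PowerSeries.coeff_mk,
        hwhigh, high_coeff, Nat.cast_zero, if_neg (by omega), hw0]
    have hfunit : IsUnit (HahnSeries.ofPowerSeries ℤ R f) :=
      (PowerSeries.isUnit_iff_constantCoeff.mpr (by rw [hfconst]; exact isUnit_one)).map _
    set s : LaurentSeries R := (↑hfunit.unit⁻¹ : LaurentSeries R) * wlow with hs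
    have hscoeff : ∀ i, s.coeff i ∈ J ^ 1 := by
      intro i
      rw [pow_one, hs]
      refine coeff_mul_mem_right J ?_ i
      intro j
      rw [hwlow, low_coeff]
      split_ifs with h
      · exact hwneg j h
      · exact J.zero_mem
    have hkey : Good (1 + s) := key J hJnil e hJe e 1 le_rfl (by omega) s hscoeff
    have h1s : (↑hfunit.unit : LaurentSeries R) * (1 + s) = w := by
      rw [mul_add, mul_one, hs, Units.mul_inv_cancel_left, IsUnit.unit_spec, ← hfw]
      rw [add_comm]
      exact low_add_high 0 w
    have hGoodw : Good w := by
      rw [← h1s]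
      refine Good.mul ?_ hkey
      have : (↑hfunit.unit : LaurentSeries R) = HahnSeries.ofPowerSeries ℤ R f :=
        IsUnit.unit_spec hfunit
      rw [this]
      exact good_ofPowerSeries f hfconst
    have hgw : (g : LaurentSeries R) = HahnSeries.single m (cu : R) * w := by
      rw [hwdef, ← mul_assoc, HahnSeries.single_mul_single, add_neg_cancel, Units.mul_inv,
        HahnSeries.single_zero_one, one_mul]
    have hGoodsingle : Good (HahnSeries.single m (cu : R)) := by
      refine ⟨m, 1, (Polynomial.isUnit_C.mpr cu.isUnit).unit, map_one _, ?_⟩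
      rw [show (HahnSeries.ofPowerSeries ℤ (MonoidAlgebra 𝔽 P)) 1 = 1 from map_one _, mul_one,
        IsUnit.unit_spec]
      rw [iota, Polynomial.aeval_C, Stmt9Aux.algebraMap_eq, HahnSeries.single_mul_single, add_zero,
        one_mul]
    rw [hgw]
    exact hGoodsingle.mul hGoodw
  obtain ⟨M, F, Y, hF, hgeq⟩ := hGood
  have hiotaY : iota ((Y : Polynomial R)) =
      Polynomial.aeval (HahnSeries.single (-1 : ℤ) (1 : R)) ((Y : Polynomial R)) := rfl
  refine ⟨(HahnSeries.single M 1 * HahnSeries.ofPowerSeries ℤ R F, Y), ⟨⟨M, F, hF, rfl⟩, hgeq⟩, ?_⟩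
  -- Uniqueness
  rintro ⟨x', y'⟩ ⟨⟨m', f', hf', hx'⟩, hg'⟩
  dsimp only at hx' hg' ⊢
  rw [hx'] at hg'
  have hE : HahnSeries.single m' 1 * HahnSeries.ofPowerSeries ℤ R f' * iota (y' : Polynomial R)
      = HahnSeries.single M 1 * HahnSeries.ofPowerSeries ℤ R F * iota (Y : Polynomial R) :=
    hg'.symm.trans hgeq
  have huF : IsUnit F := PowerSeries.isUnit_iff_constantCoeff.mpr (by rw [hF]; exact isUnit_one)
  set Fu := huF.unit with hFu
  have hFuval : (Fu : PowerSeries R) = F := IsUnit.unit_spec huF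
  have hconstFuinv : PowerSeries.constantCoeff ((Fu⁻¹ : (PowerSeries R)ˣ) : PowerSeries R)
      = 1 := by
    have h1 : PowerSeries.constantCoeff ((Fu : PowerSeries R)
        * ((Fu⁻¹ : (PowerSeries R)ˣ) : PowerSeries R)) = 1 := by
      rw [Units.mul_inv, map_one]
    rw [map_mul, hFuval, hF, one_mul] at h1
    exact h1
  set z : (Polynomial R)ˣ := Y * y'⁻¹ with hz
  set G : PowerSeries R := f' * ((Fu⁻¹ : (PowerSeries R)ˣ) : PowerSeries R) with hG
  have hGconst : PowerSeries.constantCoeff G = 1 := by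
    rw [hG, map_mul, hf', hconstFuinv, one_mul]
  have hVunit : IsUnit (HahnSeries.single M (1:R) * HahnSeries.ofPowerSeries ℤ R F
      * iota (y' : Polynomial R)) := by
    refine (IsUnit.mul ?_ ?_).mul ?_
    · exact isUnit_single M 1
    · exact huF.map _
    · exact y'.isUnit.map _
  have hcancel : HahnSeries.single (m' - M) 1 * HahnSeries.ofPowerSeries ℤ R G
      = iota ((z : Polynomial R)) := by
    refine hVunit.mul_right_cancel ?_
    have lhs : HahnSeries.single (m' - M) (1:R) * HahnSeries.ofPowerSeries ℤ R G
        * (HahnSeries.single M 1 * HahnSeries.ofPowerSeries ℤ R F * iota (y' : Polynomial R))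
        = HahnSeries.single m' 1 * HahnSeries.ofPowerSeries ℤ R f'
          * iota (y' : Polynomial R) := by
      have h1 : (HahnSeries.single (m' - M) (1:R)) * HahnSeries.single M (1:R)
          = HahnSeries.single m' 1 := by
        rw [HahnSeries.single_mul_single, sub_add_cancel, mul_one]
      have h2 : HahnSeries.ofPowerSeries ℤ R G * HahnSeries.ofPowerSeries ℤ R F
          = HahnSeries.ofPowerSeries ℤ R f' := by
        rw [← map_mul, hG, mul_assoc, ← hFuval, Units.inv_mul, mul_one]
      calc HahnSeries.single (m' - M) (1:R) * HahnSeries.ofPowerSeries ℤ R G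
          * (HahnSeries.single M 1 * HahnSeries.ofPowerSeries ℤ R F * iota (y' : Polynomial R))
          = (HahnSeries.single (m' - M) (1:R) * HahnSeries.single M (1:R))
            * (HahnSeries.ofPowerSeries ℤ R G * HahnSeries.ofPowerSeries ℤ R F)
            * iota (y' : Polynomial R) := by ring
        _ = _ := by rw [h1, h2]
    have rhs : iota ((z : Polynomial R))
        * (HahnSeries.single M 1 * HahnSeries.ofPowerSeries ℤ R F * iota (y' : Polynomial R))
        = HahnSeries.single M 1 * HahnSeries.ofPowerSeries ℤ R F * iota (Y : Polynomial R) := by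
      have h3 : iota ((z : Polynomial R)) * iota (y' : Polynomial R)
          = iota ((Y : Polynomial R)) := by
        rw [← map_mul, hz, Units.val_mul, mul_assoc, Units.inv_mul, mul_one]
      calc iota ((z : Polynomial R))
          * (HahnSeries.single M 1 * HahnSeries.ofPowerSeries ℤ R F * iota (y' : Polynomial R))
          = HahnSeries.single M 1 * HahnSeries.ofPowerSeries ℤ R F
            * (iota ((z : Polynomial R)) * iota (y' : Polynomial R)) := by ring
        _ = _ := by rw [h3]
    rw [lhs, rhs]
    exact hE
  have hz1 : z = 1 := cancel_lemma (m' - M) G hGconst z hcancel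
  have hy : y' = Y := by
    rw [hz, mul_inv_eq_one] at hz1
    exact hz1.symm
  have hx : x' = HahnSeries.single M 1 * HahnSeries.ofPowerSeries ℤ R F := by
    have hiu : IsUnit (iota ((Y : Polynomial R))) := Y.isUnit.map _
    refine hiu.mul_right_cancel ?_
    calc x' * iota ((Y : Polynomial R))
        = x' * iota ((y' : Polynomial R)) := by rw [hy]
      _ = (g : LaurentSeries R) := by rw [hx']; exact hg'.symm
      _ = HahnSeries.single M 1 * HahnSeries.ofPowerSeries ℤ R F
          * iota ((Y : Polynomial R)) := hgeq
  simp only [Prod.mk.injEq]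
  exact ⟨hx, hy⟩
end

section
/- Let R be a commutative ring, n ∈ ℕ, and A an n×n matrix over R. Regard M := Rⁿ as a module over the polynomial ring R[X], with X acting as the R-linear endomorphism determined by A. Then the sequence 0 → (R[X])ⁿ →^ρ (R[X])ⁿ →^π M → 0 is exact, where ρ is the R[X]-linear map given by the matrix X·Iₙ − A (entries X·δᵢⱼ − aᵢⱼ ∈ R[X]) and π is the R[X]-linear map sending the i-th standard basis vector of (R[X])ⁿ to the i-th standard basis vector of Rⁿ. In particular, ρ is injective, π is surjective, and the kernel of π equals the image of ρ. -/
open Polynomial Matrix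

/-- For a commutative ring `R` and an `n × n` matrix `A` over `R`, regard
`M := Rⁿ` as an `R[X]`-module with `X` acting through `A` (`Module.AEval'`). Then
`0 → R[X]ⁿ →^ρ R[X]ⁿ →^π M → 0` is exact, where `ρ` is given by the characteristic matrix
`X·Iₙ − A` and `π` sends the `i`-th standard basis vector of `R[X]ⁿ` to the `i`-th standard
basis vector of `Rⁿ`. -/
theorem stmt11 (R : Type*) [CommRing R] (n : ℕ) (A : Matrix (Fin n) (Fin n) R)
    (ρ : (Fin n → Polynomial R) →ₗ[Polynomial R] (Fin n → Polynomial R))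
    (π : (Fin n → Polynomial R) →ₗ[Polynomial R] Module.AEval' (Matrix.toLin' A))
    (hρ : ρ = Matrix.toLin' (Matrix.charmatrix A))
    (hπ : ∀ i : Fin n,
      π (Pi.single i 1) = Module.AEval'.of (Matrix.toLin' A) (Pi.single i 1)) :
    Function.Injective ρ ∧ Function.Surjective π ∧ Function.Exact ρ π := by
  classical
  have hρ' : ∀ v : Fin n → R[X], ρ v = Matrix.charmatrix A *ᵥ v := by
    intro v; rw [hρ, Matrix.toLin'_apply]
  -- π on "constant" vectors
  have hπC : ∀ w : Fin n → R, π (fun i => C (w i)) = Module.AEval'.of (Matrix.toLin' A) w := by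
    intro w
    have h1 : (fun i => C (w i)) = ∑ i : Fin n, Pi.single i (C (w i)) :=
      (Finset.univ_sum_single _).symm
    have h2 : ∀ i : Fin n, π (Pi.single i (C (w i)))
        = Module.AEval'.of (Matrix.toLin' A) (Pi.single i (w i)) := by
      intro i
      have e1 : Pi.single i (C (w i)) = C (w i) • (Pi.single i 1 : Fin n → R[X]) := by
        funext j; simp [Pi.single_apply, mul_ite]
      have e2 : Pi.single i (w i) = w i • (Pi.single i 1 : Fin n → R) := by
        funext j; simp [Pi.single_apply, mul_ite]
      rw [e1, _root_.map_smul, hπ i, Module.AEval.C_smul, e2, _root_.map_smul]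
    rw [h1, _root_.map_sum]
    simp_rw [h2]
    rw [← _root_.map_sum]
    congr 1
    exact Finset.univ_sum_single w
  -- X action on constant vectors
  have hXc : ∀ w : Fin n → R, (X : R[X]) • (fun i => C (w i)) =
      ρ (fun i => C (w i)) + fun i => C ((A *ᵥ w) i) := by
    intro w
    funext i
    rw [hρ']
    simp [Matrix.mulVec, dotProduct, Matrix.charmatrix_apply, Matrix.diagonal_apply,
      sub_mul, Finset.sum_sub_distrib, ite_mul, Finset.sum_ite_eq, _root_.map_sum]
  -- decomposition predicate
  set S : (Fin n → R[X]) → Prop :=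
    fun v => ∃ q : Fin n → R[X], ∃ w : Fin n → R, v = ρ q + fun i => C (w i) with hSdef
  have hSadd : ∀ v v', S v → S v' → S (v + v') := by
    rintro v v' ⟨q, w, rfl⟩ ⟨q', w', rfl⟩
    refine ⟨q + q', w + w', ?_⟩
    rw [_root_.map_add]
    funext i
    simp only [Pi.add_apply, _root_.map_add]
    ring
  have hSX : ∀ v, S v → S ((X : R[X]) • v) := by
    rintro v ⟨q, w, rfl⟩
    refine ⟨(X : R[X]) • q + fun i => C (w i), A *ᵥ w, ?_⟩
    rw [smul_add, hXc w, _root_.map_add, _root_.map_smul]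
    abel
  have hSC : ∀ (r : R) (v), S v → S ((C r : R[X]) • v) := by
    rintro r v ⟨q, w, rfl⟩
    refine ⟨C r • q, r • w, ?_⟩
    rw [smul_add, _root_.map_smul]
    congr 1
    funext i
    simp [smul_eq_mul, mul_comm]
  have hSmul : ∀ (p : R[X]) (v), S v → S (p • v) := by
    intro p
    induction p using Polynomial.induction_on with
    | C a => exact hSC a
    | add p q hp hq =>
        intro v hv
        rw [add_smul]
        exact hSadd _ _ (hp v hv) (hq v hv)
    | monomial k a h =>
        intro v hv
        have e : (C a * X ^ (k + 1)) • v = (X : R[X]) • ((C a * X ^ k) • v) := by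
          rw [← mul_smul]
          congr 1
          ring
        rw [e]
        exact hSX _ (h v hv)
  have hsingle : ∀ i : Fin n,
      (fun j => C ((Pi.single i 1 : Fin n → R) j)) = (Pi.single i 1 : Fin n → R[X]) := by
    intro i; funext j; simp [Pi.single_apply, apply_ite C]
  have hSall : ∀ v : Fin n → R[X], S v := by
    intro v
    have hv : v = ∑ i : Fin n, v i • (Pi.single i 1 : Fin n → R[X]) := by
      have : ∀ i : Fin n, v i • (Pi.single i 1 : Fin n → R[X]) = Pi.single i (v i) := by
        intro i; funext j; simp [Pi.single_apply, mul_ite]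
      simp_rw [this]
      exact (Finset.univ_sum_single v).symm
    rw [hv]
    apply Finset.sum_induction _ S hSadd ⟨0, 0, by funext i; simp⟩
    intro i _
    exact hSmul _ _ ⟨0, Pi.single i 1, by rw [_root_.map_zero, zero_add, hsingle i]⟩
  -- π ∘ ρ = 0
  have hπρC : ∀ w : Fin n → R, π (ρ (fun i => C (w i))) = 0 := by
    intro w
    have h := congrArg π (hXc w)
    rw [_root_.map_smul, hπC, _root_.map_add, hπC, Module.AEval'.X_smul_of] at h
    have hA : Matrix.toLin' A w = A *ᵥ w := Matrix.toLin'_apply A w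
    rw [hA] at h
    exact (right_eq_add.mp h)
  have hπρ : ∀ q : Fin n → R[X], π (ρ q) = 0 := by
    have hz : ∀ i : Fin n, π (ρ ((Pi.single i 1 : Fin n → R[X]))) = 0 := by
      intro i; rw [← hsingle i]; exact hπρC _
    intro q
    have hq : q = ∑ i : Fin n, q i • (Pi.single i 1 : Fin n → R[X]) := by
      have : ∀ i : Fin n, q i • (Pi.single i 1 : Fin n → R[X]) = Pi.single i (q i) := by
        intro i; funext j; simp [Pi.single_apply, mul_ite]
      simp_rw [this]
      exact (Finset.univ_sum_single q).symm
    rw [hq, _root_.map_sum, _root_.map_sum]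
    simp [hz]
  -- injectivity
  have hinj : Function.Injective ρ := by
    have hz : ∀ v, ρ v = 0 → v = 0 := by
      intro v hv
      rw [hρ'] at hv
      have h2 : (Matrix.charmatrix A).adjugate *ᵥ (Matrix.charmatrix A *ᵥ v) = 0 := by
        rw [hv, Matrix.mulVec_zero]
      rw [Matrix.mulVec_mulVec, Matrix.adjugate_mul, Matrix.smul_mulVec,
        Matrix.one_mulVec] at h2
      funext i
      have h3 : (Matrix.charmatrix A).det * v i = 0 := by
        have := congrFun h2 i
        simpa [smul_eq_mul] using this
      have hm : ((Matrix.charmatrix A).det).Monic := A.charpoly_monic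
      exact hm.isRegular.left (by simpa using h3)
    intro a b hab
    have := hz (a - b) (by rw [_root_.map_sub, hab, sub_self])
    exact sub_eq_zero.mp this
  -- surjectivity
  have hsurj : Function.Surjective π := by
    intro y
    refine ⟨fun i => C (((Module.AEval'.of (Matrix.toLin' A)).symm y) i), ?_⟩
    rw [hπC]
    simp
  refine ⟨hinj, hsurj, ?_⟩
  rw [LinearMap.exact_iff]
  ext v
  simp only [LinearMap.mem_ker, LinearMap.mem_range]
  constructor
  · intro hv
    obtain ⟨q, w, rfl⟩ := hSall v
    rw [_root_.map_add, hπρ, zero_add, hπC] at hv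
    have hw : w = 0 := by
      have := (Module.AEval'.of (Matrix.toLin' A)).injective (by simpa using hv)
      simpa using this
    refine ⟨q, ?_⟩
    have hz0 : (fun i => C ((0 : Fin n → R) i)) = (0 : Fin n → R[X]) := by
      funext i; simp
    rw [hw, hz0, add_zero]
  · rintro ⟨q, rfl⟩
    exact hπρ q
end

section
/- Let p be a prime, q a power of p, and 𝔽_q the finite field with q elements. Let F be a finite separable field extension of the rational function field 𝔽_q(t) of degree n = [F : 𝔽_q(t)], and let K/F be a finite abelian Galois extension with Galois group G. Then K_∞ := K ⊗_{𝔽_q(t)} 𝔽_q((t⁻¹)) is a free module of rank n over the group algebra 𝔽_q((t⁻¹))[G]; equivalently, there is an 𝔽_q((t⁻¹))-linear isomorphism K_∞ ≅ (𝔽_q((t⁻¹))[G])ⁿ intertwining the actions of G, where G acts on K_∞ through the first tensor factor and on (𝔽_q((t⁻¹))[G])ⁿ by multiplication by group elements. -/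
open Matrix MvPolynomial Finset

universe u

theorem exists_normal_basis (F K : Type u) [Field F] [Field K] [Algebra F K]
    [FiniteDimensional F K] [IsGalois F K] [Infinite F] :
    ∃ b : Module.Basis (K ≃ₐ[F] K) F K, ∀ g σ : K ≃ₐ[F] K, g (b σ) = b (g * σ) := by
  classical
  have hcard : Fintype.card (K ≃ₐ[F] K) = Module.finrank F K := by
    rw [← IsGalois.card_aut_eq_finrank F K, Nat.card_eq_fintype_card]
  obtain ⟨e⟩ : Nonempty (Module.Basis (K ≃ₐ[F] K) F K) :=
    ⟨(Module.finBasis F K).reindex (Fintype.equivFinOfCardEq hcard).symm⟩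
  set A : Matrix (K ≃ₐ[F] K) (K ≃ₐ[F] K) K := Matrix.of fun σ k => σ (e k) with hA
  -- Dedekind: the matrix `A` is invertible
  have hker : ∀ v : (K ≃ₐ[F] K) → K, Matrix.vecMul v A = 0 → v = 0 := by
    intro v hv
    have hinj : Function.Injective (fun g : K ≃ₐ[F] K => (g : K →* K)) := by
      intro g g' hgg'
      ext x
      exact DFunLike.congr_fun hgg' x
    have hli := (linearIndependent_monoidHom K K).comp _ hinj
    have hmap : (∑ g : K ≃ₐ[F] K, v g • (g.toLinearMap : K →ₗ[F] K)) = 0 := by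
      apply Module.Basis.ext e
      intro k
      have h0 := congrFun hv k
      simp only [Matrix.vecMul, dotProduct, Pi.zero_apply] at h0
      simp only [LinearMap.sum_apply, LinearMap.smul_apply, AlgEquiv.toLinearMap_apply,
        LinearMap.zero_apply, smul_eq_mul]
      simpa [hA] using h0
    have hz : (∑ g : K ≃ₐ[F] K, v g • ((g : K →* K) : K → K)) = 0 := by
      funext y
      have := congrFun (congrArg (fun (f : K →ₗ[F] K) => (f : K → K)) hmap) y
      simpa [smul_eq_mul] using this
    exact funext (Fintype.linearIndependent_iff.mp hli v hz)
  have hAu : IsUnit A := by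
    rw [← Matrix.vecMul_injective_iff_isUnit]
    intro v w hvw
    have : Matrix.vecMul (v - w) A = 0 := by
      rw [Matrix.sub_vecMul]
      simpa [sub_eq_zero] using hvw
    have := hker _ this
    exact sub_eq_zero.mp this
  obtain ⟨c, hc⟩ : ∃ c, A.mulVec c = Pi.single 1 1 :=
    (Matrix.mulVec_surjective_iff_isUnit.mpr hAu) _
  -- the determinant polynomial
  set P : MvPolynomial (K ≃ₐ[F] K) F :=
    (Matrix.of fun σ τ : K ≃ₐ[F] K => ∑ k : K ≃ₐ[F] K, ∑ l : K ≃ₐ[F] K,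
      MvPolynomial.X k * MvPolynomial.X l *
        MvPolynomial.C (Algebra.trace F K (σ (e k) * τ (e l)))).det with hP
  have hval : ∀ (R : Type u) [CommRing R] (φ : F →+* R) (c' : (K ≃ₐ[F] K) → R),
      MvPolynomial.eval c' (MvPolynomial.map φ P) =
      (Matrix.of fun σ τ : K ≃ₐ[F] K => ∑ k : K ≃ₐ[F] K, ∑ l : K ≃ₐ[F] K,
        c' k * c' l * φ (Algebra.trace F K (σ (e k) * τ (e l)))).det := by
    intro R _ φ c'
    rw [hP]
    rw [show MvPolynomial.eval c' (MvPolynomial.map φ _) =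
      ((MvPolynomial.eval c').comp (MvPolynomial.map φ)) _ from rfl]
    rw [RingHom.map_det]
    congr 1
    ext σ τ
    simp only [RingHom.comp_apply, RingHom.mapMatrix_apply, Matrix.map_apply, Matrix.of_apply]
    simp [_root_.map_mul]
  -- nonvanishing of P over K at the point c
  have hu : ∀ g : K ≃ₐ[F] K, (∑ k : K ≃ₐ[F] K, c k * g (e k)) = (Pi.single 1 1 : (K ≃ₐ[F] K) → K) g := by
    intro g
    have := congrFun hc g
    simp only [Matrix.mulVec, dotProduct, hA, Matrix.of_apply] at this
    simpa [mul_comm] using this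
  have hPne : P ≠ 0 := by
    intro h0
    have h1 : MvPolynomial.eval c (MvPolynomial.map (algebraMap F K) P) = 0 := by
      rw [h0]; simp
    rw [hval K (algebraMap F K) c] at h1
    have hBone : (Matrix.of fun σ τ : K ≃ₐ[F] K => ∑ k : K ≃ₐ[F] K, ∑ l : K ≃ₐ[F] K,
        c k * c l * (algebraMap F K) (Algebra.trace F K (σ (e k) * τ (e l)))) = 1 := by
      ext σ τ
      have hentry : ∀ k l : K ≃ₐ[F] K,
          c k * c l * (algebraMap F K) (Algebra.trace F K (σ (e k) * τ (e l)))
          = ∑ ρ : K ≃ₐ[F] K, (c k * (ρ * σ) (e k)) * (c l * (ρ * τ) (e l)) := by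
        intro k l
        rw [trace_eq_sum_automorphisms, Finset.mul_sum]
        refine Finset.sum_congr rfl fun ρ _ => ?_
        simp only [_root_.map_mul, AlgEquiv.mul_apply]
        ring
      calc (Matrix.of fun σ τ : K ≃ₐ[F] K => ∑ k : K ≃ₐ[F] K, ∑ l : K ≃ₐ[F] K,
            c k * c l * (algebraMap F K) (Algebra.trace F K (σ (e k) * τ (e l)))) σ τ
          = ∑ k : K ≃ₐ[F] K, ∑ l : K ≃ₐ[F] K, ∑ ρ : K ≃ₐ[F] K,
              (c k * (ρ * σ) (e k)) * (c l * (ρ * τ) (e l)) := by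
            simp only [Matrix.of_apply]
            exact Finset.sum_congr rfl fun k _ => Finset.sum_congr rfl fun l _ => hentry k l
        _ = ∑ ρ : K ≃ₐ[F] K, (∑ k : K ≃ₐ[F] K, c k * (ρ * σ) (e k)) *
              (∑ l : K ≃ₐ[F] K, c l * (ρ * τ) (e l)) := by
            have h1 : ∀ k : K ≃ₐ[F] K,
                (∑ l : K ≃ₐ[F] K, ∑ ρ : K ≃ₐ[F] K, (c k * (ρ * σ) (e k)) * (c l * (ρ * τ) (e l)))
                = ∑ ρ : K ≃ₐ[F] K, ∑ l : K ≃ₐ[F] K,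
                    (c k * (ρ * σ) (e k)) * (c l * (ρ * τ) (e l)) := fun k => Finset.sum_comm
            rw [Finset.sum_congr rfl (fun k _ => h1 k), Finset.sum_comm]
            refine Finset.sum_congr rfl fun ρ _ => ?_
            rw [Finset.sum_mul_sum]
        _ = ∑ ρ : K ≃ₐ[F] K, ((Pi.single 1 1 : (K ≃ₐ[F] K) → K) (ρ * σ))
              * ((Pi.single 1 1 : (K ≃ₐ[F] K) → K) (ρ * τ)) := by
            refine Finset.sum_congr rfl fun ρ _ => ?_
            rw [hu (ρ * σ), hu (ρ * τ)]
        _ = (1 : Matrix (K ≃ₐ[F] K) (K ≃ₐ[F] K) K) σ τ := by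
            rw [Finset.sum_eq_single σ⁻¹]
            · by_cases h : σ = τ
              · simp [h, Pi.single_apply, Matrix.one_apply]
              · have : σ⁻¹ * τ ≠ 1 := fun hh => h (inv_mul_eq_one.mp hh)
                simp [Pi.single_apply, this, Matrix.one_apply, h]
            · intro ρ _ hρ
              have : ρ * σ ≠ 1 := fun hh => hρ (eq_inv_of_mul_eq_one_left hh)
              simp [Pi.single_apply, this]
            · simp
    rw [hBone, Matrix.det_one] at h1
    exact one_ne_zero h1
  -- find a point over F where P does not vanish
  obtain ⟨c0, hc0⟩ : ∃ c0 : (K ≃ₐ[F] K) → F, MvPolynomial.eval c0 P ≠ 0 := by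
    by_contra hcon
    push_neg at hcon
    apply hPne
    apply MvPolynomial.funext
    intro c0
    rw [hcon c0, map_zero]
  set x : K := ∑ k : K ≃ₐ[F] K, c0 k • e k with hx
  have hσx : ∀ σ : K ≃ₐ[F] K, σ x = ∑ k : K ≃ₐ[F] K, c0 k • σ (e k) := by
    intro σ
    rw [hx, map_sum]
    exact Finset.sum_congr rfl fun k _ => σ.toAlgHom.map_smul_of_tower (c0 k) (e k)
  have hTx : ∀ σ τ : K ≃ₐ[F] K, Algebra.trace F K (σ x * τ x)
      = ∑ k : K ≃ₐ[F] K, ∑ l : K ≃ₐ[F] K,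
          c0 k * c0 l * Algebra.trace F K (σ (e k) * τ (e l)) := by
    intro σ τ
    rw [hσx σ, hσx τ, Finset.sum_mul_sum, map_sum]
    refine Finset.sum_congr rfl fun k _ => ?_
    rw [map_sum]
    refine Finset.sum_congr rfl fun l _ => ?_
    rw [smul_mul_assoc, mul_smul_comm, _root_.map_smul, _root_.map_smul, smul_eq_mul, smul_eq_mul]
    ring
  set T : Matrix (K ≃ₐ[F] K) (K ≃ₐ[F] K) F :=
    Matrix.of fun σ τ => Algebra.trace F K (σ x * τ x) with hT
  have hdetT : T.det ≠ 0 := by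
    have h2 := hval F (RingHom.id F) c0
    rw [MvPolynomial.map_id] at h2
    have h3 : T = Matrix.of fun σ τ : K ≃ₐ[F] K => ∑ k : K ≃ₐ[F] K, ∑ l : K ≃ₐ[F] K,
        c0 k * c0 l * (RingHom.id F) (Algebra.trace F K (σ (e k) * τ (e l))) := by
      ext σ τ
      simpa [hT] using hTx σ τ
    rw [← h3] at h2
    rw [← h2]
    exact hc0
  have hli : LinearIndependent F (fun σ : K ≃ₐ[F] K => σ x) := by
    rw [Fintype.linearIndependent_iff]
    intro d hd
    have hvm : Matrix.vecMul d T = 0 := by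
      funext τ
      have : (∑ σ : K ≃ₐ[F] K, d σ • σ x) * τ x = 0 := by rw [hd, zero_mul]
      have h4 : (∑ σ : K ≃ₐ[F] K, d σ • (σ x * τ x)) = 0 := by
        rw [← this, Finset.sum_mul]
        exact Finset.sum_congr rfl fun σ _ => (smul_mul_assoc (d σ) (σ x) (τ x)).symm
      have h5 := congrArg (Algebra.trace F K) h4
      rw [map_sum, map_zero] at h5
      simp only [_root_.map_smul, smul_eq_mul] at h5
      simpa [Matrix.vecMul, dotProduct, hT] using h5
    intro σ
    have := Matrix.eq_zero_of_vecMul_eq_zero hdetT hvm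
    exact congrFun this σ
  have hne : Nonempty (K ≃ₐ[F] K) := ⟨1⟩
  refine ⟨basisOfLinearIndependentOfCardEqFinrank hli hcard, ?_⟩
  intro g σ
  simp only [coe_basisOfLinearIndependentOfCardEqFinrank]
  exact (AlgEquiv.mul_apply g σ x).symm


set_option maxHeartbeats 2000000 in
/-- For a finite separable extension `F` of `𝔽_q(t)` of degree `n` and a
finite abelian Galois extension `K/F` with Galois group `G`, the module
`K_∞ := K ⊗_{𝔽_q(t)} 𝔽_q((t⁻¹))` is free of rank `n` over `𝔽_q((t⁻¹))[G]`: there is an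
`𝔽_q((t⁻¹))`-linear isomorphism `K_∞ ≅ (𝔽_q((t⁻¹))[G])ⁿ` intertwining the `G`-actions.
Here `𝔽_q((t⁻¹))` is realized as the Laurent series field `LaurentSeries Fq` with
`𝔽_q(t)`-algebra structure `ψ` sending `t` to the inverse of the Laurent variable. -/
theorem stmt12 (p q : ℕ) (hp : p.Prime) (hq : ∃ k : ℕ, 0 < k ∧ q = p ^ k)
    (Fq : Type) [Field Fq] [Fintype Fq] (hcard : Fintype.card Fq = q)
    (F : Type) [Field F] [Algebra (RatFunc Fq) F] [FiniteDimensional (RatFunc Fq) F]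
    [Algebra.IsSeparable (RatFunc Fq) F]
    (K : Type) [Field K] [Algebra F K] [Algebra (RatFunc Fq) K]
    [IsScalarTower (RatFunc Fq) F K] [FiniteDimensional F K] [IsGalois F K]
    (hab : ∀ σ τ : K ≃ₐ[F] K, σ * τ = τ * σ)
    (ψ : RatFunc Fq →+* LaurentSeries Fq)
    (hψX : ψ (algebraMap (Polynomial Fq) (RatFunc Fq) Polynomial.X)
      = HahnSeries.single (-1 : ℤ) 1)
    (hψC : ∀ c : Fq, ψ (RatFunc.C c) = HahnSeries.C c) :
    letI : Algebra (RatFunc Fq) (LaurentSeries Fq) := ψ.toAlgebra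
    ∃ e : TensorProduct (RatFunc Fq) (LaurentSeries Fq) K ≃ₗ[LaurentSeries Fq]
        (Fin (Module.finrank (RatFunc Fq) F) → MonoidAlgebra (LaurentSeries Fq) (K ≃ₐ[F] K)),
      ∀ (g : K ≃ₐ[F] K) (x : TensorProduct (RatFunc Fq) (LaurentSeries Fq) K),
        e (LinearMap.lTensor (LaurentSeries Fq)
            (LinearMap.restrictScalars (RatFunc Fq) (g : K ≃ₐ[F] K).toLinearMap) x)
          = MonoidAlgebra.of (LaurentSeries Fq) (K ≃ₐ[F] K) g • e x := by
  classical
  letI : Algebra (RatFunc Fq) (LaurentSeries Fq) := ψ.toAlgebra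
  haveI : Infinite (RatFunc Fq) :=
    Infinite.of_injective _ (IsFractionRing.injective (Polynomial Fq) (RatFunc Fq))
  haveI : Infinite F := Infinite.of_injective _ (algebraMap (RatFunc Fq) F).injective
  obtain ⟨bK, hbK⟩ := exists_normal_basis F K
  let bF : Module.Basis (Fin (Module.finrank (RatFunc Fq) F)) (RatFunc Fq) F :=
    Module.finBasis _ _
  let bAK : Module.Basis ((Fin (Module.finrank (RatFunc Fq) F)) × (K ≃ₐ[F] K)) (RatFunc Fq) K :=
    bF.smulTower bK
  let bT := bAK.baseChange (LaurentSeries Fq)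
  let bG : Module.Basis (K ≃ₐ[F] K) (LaurentSeries Fq) (MonoidAlgebra (LaurentSeries Fq) (K ≃ₐ[F] K)) :=
    MonoidAlgebra.basis _ _
  let bM := (Pi.basis fun _ : Fin (Module.finrank (RatFunc Fq) F) => bG).reindex
    (Equiv.sigmaEquivProd (Fin (Module.finrank (RatFunc Fq) F)) (K ≃ₐ[F] K))
  let E := bT.equiv bM (Equiv.refl _)
  refine ⟨E, ?_⟩
  intro g
  let mulG : (Fin (Module.finrank (RatFunc Fq) F) →
      MonoidAlgebra (LaurentSeries Fq) (K ≃ₐ[F] K)) →ₗ[LaurentSeries Fq]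
      (Fin (Module.finrank (RatFunc Fq) F) → MonoidAlgebra (LaurentSeries Fq) (K ≃ₐ[F] K)) :=
    LinearMap.pi fun j => (LinearMap.mulLeft (LaurentSeries Fq)
      (MonoidAlgebra.of (LaurentSeries Fq) (K ≃ₐ[F] K) g)).comp (LinearMap.proj j)
  have hbM : ∀ (i : Fin (Module.finrank (RatFunc Fq) F)) (h : K ≃ₐ[F] K),
      bM (i, h) = Pi.single i (MonoidAlgebra.single h (1 : LaurentSeries Fq)) := by
    intro i h
    rw [Module.Basis.reindex_apply]
    have : (Equiv.sigmaEquivProd (Fin (Module.finrank (RatFunc Fq) F)) (K ≃ₐ[F] K)).symm (i, h)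
        = ⟨i, h⟩ := rfl
    rw [this, Pi.basis_apply]
    rfl
  have key : (E.toLinearMap ∘ₗ
      ((LinearMap.restrictScalars (RatFunc Fq) (g : K ≃ₐ[F] K).toLinearMap).baseChange
        (LaurentSeries Fq)))
      = mulG ∘ₗ E.toLinearMap := by
    apply Module.Basis.ext bT
    rintro ⟨i, h⟩
    have hbT : ∀ ih : (Fin (Module.finrank (RatFunc Fq) F)) × (K ≃ₐ[F] K),
        bT ih = (1 : LaurentSeries Fq) ⊗ₜ[RatFunc Fq] (bF ih.1 • bK ih.2) := by
      intro ih
      rw [show bT ih = (1 : LaurentSeries Fq) ⊗ₜ[RatFunc Fq] (bAK ih) from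
        Module.Basis.baseChange_apply _ _ _]
      rw [show bAK ih = bF ih.1 • bK ih.2 from Module.Basis.smulTower_apply _ _ _]
    have hl : ((LinearMap.restrictScalars (RatFunc Fq) (g : K ≃ₐ[F] K).toLinearMap).baseChange
        (LaurentSeries Fq)) (bT (i, h))
        = bT (i, g * h) := by
      rw [hbT (i, h), hbT (i, g * h), LinearMap.baseChange_tmul]
      congr 1
      rw [LinearMap.coe_restrictScalars, _root_.map_smul]
      simp only [AlgEquiv.toLinearMap_apply]
      rw [hbK g h]
    rw [LinearMap.comp_apply, LinearMap.comp_apply, hl]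
    have hE : ∀ ih, E (bT ih) = bM ih := fun ih => by
      rw [show E (bT ih) = (bT.equiv bM (Equiv.refl _)) (bT ih) from rfl, Module.Basis.equiv_apply,
        Equiv.refl_apply]
    show E (bT (i, g * h)) = mulG (E (bT (i, h)))
    rw [hE (i, g * h), hE (i, h), hbM, hbM]
    funext j
    simp only [mulG, LinearMap.pi_apply, LinearMap.comp_apply, LinearMap.proj_apply,
      LinearMap.mulLeft_apply]
    by_cases hj : j = i
    · subst hj
      simp only [Pi.single_eq_same]
      rw [MonoidAlgebra.of_apply, MonoidAlgebra.single_mul_single, one_mul]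
    · simp only [Pi.single_eq_of_ne hj, mul_zero]
  intro x
  have hx := LinearMap.congr_fun key x
  simp only [LinearMap.comp_apply, LinearEquiv.coe_coe] at hx
  have hbc : (LinearMap.lTensor (LaurentSeries Fq)
      (LinearMap.restrictScalars (RatFunc Fq) (g : K ≃ₐ[F] K).toLinearMap)) x
      = ((LinearMap.restrictScalars (RatFunc Fq) (g : K ≃ₐ[F] K).toLinearMap).baseChange
        (LaurentSeries Fq)) x :=
    (congrFun (LinearMap.baseChange_eq_ltensor
      (f := LinearMap.restrictScalars (RatFunc Fq) (g : K ≃ₐ[F] K).toLinearMap)) x).symm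
  rw [hbc, hx]
  funext j
  simp only [mulG, LinearMap.pi_apply, LinearMap.comp_apply, LinearMap.proj_apply,
    LinearMap.mulLeft_apply, Pi.smul_apply, smul_eq_mul]
end
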